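/- arXiv:2408.13434 — 4 statements merged into one kernel-verified Lean document; each statement's English description precedes it below -/
import Mathlib

section
/- Let d ≥ 1 and c > 0. There exists a constant C > 0, depending only on d and c, with the following property: for every positive integer N, if R_1, …, R_N is a partition of S^d into N pairwise disjoint Borel measurable regions, each of σ-measure 1/N and each of Euclidean diameter at most c · N^{-1/d}, and x_i ∈ R_i for each i, then the spherical cap discrepancy of the point set {x_1, …, x_N} is at most C · N^{-1/d}. -/
open MeasureTheory Metric
open scoped ENNReal RealInnerProductSpace

/-- The rotation-invariant Borel probability measure on the unit sphere `S^d ⊂ ℝ^{d+1}`: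
the normalized `d`-dimensional Hausdorff measure restricted to the sphere. -/
noncomputable def sphereMeasure (d : ℕ) : Measure (EuclideanSpace ℝ (Fin (d + 1))) :=
  (μH[(d : ℝ)] (sphere (0 : EuclideanSpace ℝ (Fin (d + 1))) 1))⁻¹ •
    (μH[(d : ℝ)]).restrict (sphere (0 : EuclideanSpace ℝ (Fin (d + 1))) 1)

/-- The spherical cap on `S^d` cut out by the closed half-space `{x : ⟪x, v⟫ ≥ t}`. -/
def sphericalCap (d : ℕ) (v : EuclideanSpace ℝ (Fin (d + 1))) (t : ℝ) :
    Set (EuclideanSpace ℝ (Fin (d + 1))) :=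
  {x | x ∈ sphere (0 : EuclideanSpace ℝ (Fin (d + 1))) 1 ∧ t ≤ ⟪x, v⟫}

open scoped Classical in
/-- The spherical cap discrepancy of a finite subset `X` of `S^d`: the supremum over all
spherical caps `C` of `|card(X ∩ C)/card X − σ(C)|`. -/
noncomputable def capDiscrepancy (d : ℕ) (X : Finset (EuclideanSpace ℝ (Fin (d + 1)))) : ℝ :=
  sSup {r : ℝ | ∃ v : EuclideanSpace ℝ (Fin (d + 1)), ∃ t : ℝ, ‖v‖ = 1 ∧
    r = |((X.filter fun x => t ≤ ⟪x, v⟫).card : ℝ) / (X.card : ℝ) -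
          (sphereMeasure d (sphericalCap d v t)).toReal|}

open scoped Classical

namespace CapDiscAux

variable {d : ℕ}

local notation "E" => EuclideanSpace ℝ (Fin (d + 1))
local notation "S" => sphere (0 : EuclideanSpace ℝ (Fin (d + 1))) 1
local notation "μ" => (μH[(d : ℝ)] : Measure (EuclideanSpace ℝ (Fin (d + 1))))

/-- The angle of `x` to the axis `v`. -/
noncomputable def theta (v x : E) : ℝ := Real.arccos ⟪x, v⟫

/-- The unit vector in direction of the component of `x` orthogonal to `v`. -/
noncomputable def uvec (v x : E) : E := ‖x - ⟪x, v⟫ • v‖⁻¹ • (x - ⟪x, v⟫ • v)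

/-- The map shifting the polar angle (relative to axis `v`) by `a`. -/
noncomputable def shiftMap (v : E) (a : ℝ) (x : E) : E :=
  Real.cos (theta v x + a) • v + Real.sin (theta v x + a) • uvec v x

/-- The band of the sphere with polar angle (relative to `v`) in `[α₁, α₂]`. -/
def band (v : E) (α₁ α₂ : ℝ) : Set E :=
  {x | x ∈ sphere (0 : E) 1 ∧ ⟪x, v⟫ ∈ Set.Icc (Real.cos α₂) (Real.cos α₁)}

lemma mem_sphere_iff_norm_one {x : E} : x ∈ S ↔ ‖x‖ = 1 := by
  simp [mem_sphere_iff_norm]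

lemma abs_inner_le_one {v x : E} (hv : ‖v‖ = 1) (hx : ‖x‖ = 1) : |⟪x, v⟫| ≤ 1 := by
  simpa [hv, hx] using abs_real_inner_le_norm x v

lemma norm_sub_sq_unit {x y : E} (hx : ‖x‖ = 1) (hy : ‖y‖ = 1) :
    ‖x - y‖ ^ 2 = 2 - 2 * ⟪x, y⟫ := by
  rw [norm_sub_sq_real, hx, hy]; ring

lemma norm_wvec_sq {v x : E} (hv : ‖v‖ = 1) (hx : ‖x‖ = 1) :
    ‖x - ⟪x, v⟫ • v‖ ^ 2 = 1 - ⟪x, v⟫ ^ 2 := by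
  rw [norm_sub_sq_real, real_inner_smul_right, norm_smul, hx]
  simp [hv, mul_pow]
  ring

lemma inner_wvec_v {v x : E} (hv : ‖v‖ = 1) : ⟪x - ⟪x, v⟫ • v, v⟫ = 0 := by
  rw [inner_sub_left, real_inner_smul_left, real_inner_self_eq_norm_sq, hv]
  ring

lemma cos_theta {v x : E} (hv : ‖v‖ = 1) (hx : ‖x‖ = 1) :
    Real.cos (theta v x) = ⟪x, v⟫ := by
  have h := abs_le.1 (abs_inner_le_one hv hx)
  exact Real.cos_arccos h.1 h.2

lemma sin_theta {v x : E} (hv : ‖v‖ = 1) (hx : ‖x‖ = 1) :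
    Real.sin (theta v x) = ‖x - ⟪x, v⟫ • v‖ := by
  rw [theta, Real.sin_arccos, ← norm_wvec_sq hv hx, Real.sqrt_sq (norm_nonneg _)]

lemma theta_mem {v x : E} : theta v x ∈ Set.Icc 0 Real.pi :=
  ⟨Real.arccos_nonneg _, Real.arccos_le_pi _⟩

lemma norm_wvec_pos {v x : E} (hv : ‖v‖ = 1) (hx : ‖x‖ = 1) (hlt : ⟪x, v⟫ ^ 2 < 1) :
    0 < ‖x - ⟪x, v⟫ • v‖ := by
  have h2 : 0 < ‖x - ⟪x, v⟫ • v‖ ^ 2 := by rw [norm_wvec_sq hv hx]; linarith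
  have h3 := norm_nonneg (x - ⟪x, v⟫ • v)
  nlinarith

lemma inner_uvec_v {v x : E} (hv : ‖v‖ = 1) : ⟪uvec v x, v⟫ = 0 := by
  rw [uvec, real_inner_smul_left, inner_wvec_v hv, mul_zero]

lemma norm_uvec {v x : E} (hv : ‖v‖ = 1) (hx : ‖x‖ = 1) (hlt : ⟪x, v⟫ ^ 2 < 1) :
    ‖uvec v x‖ = 1 := by
  have hw := norm_wvec_pos hv hx hlt
  rw [uvec, norm_smul, Real.norm_eq_abs, abs_inv, abs_of_nonneg (norm_nonneg _),
    inv_mul_cancel₀ hw.ne']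

lemma decomp {v x : E} (hv : ‖v‖ = 1) (hx : ‖x‖ = 1) (hlt : ⟪x, v⟫ ^ 2 < 1) :
    x = ⟪x, v⟫ • v + Real.sin (theta v x) • uvec v x := by
  rw [sin_theta hv hx, uvec, smul_smul, mul_inv_cancel₀ (norm_wvec_pos hv hx hlt).ne', one_smul]
  abel

lemma inner_combo {v u u' : E} (hv : ‖v‖ = 1) (hu : ⟪u, v⟫ = 0) (hu' : ⟪u', v⟫ = 0)
    (a b a' b' : ℝ) :
    ⟪a • v + b • u, a' • v + b' • u'⟫ = a * a' + b * b' * ⟪u, u'⟫ := by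
  have h1 : ⟪v, u'⟫ = 0 := by rw [real_inner_comm]; exact hu'
  simp only [inner_add_left, inner_add_right, real_inner_smul_left, real_inner_smul_right,
    hu, h1, real_inner_self_eq_norm_sq, hv, mul_zero, add_zero, zero_add, one_pow, mul_one]
  ring

lemma norm_combo {v u : E} (hv : ‖v‖ = 1) (hu : ‖u‖ = 1) (huv : ⟪u, v⟫ = 0) (a b : ℝ) :
    ‖a • v + b • u‖ = Real.sqrt (a ^ 2 + b ^ 2) := by
  have huu : ⟪u, u⟫ = (1 : ℝ) := by
    rw [real_inner_self_eq_norm_sq, hu]; norm_num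
  have h := inner_combo hv huv huv a b a b
  rw [huu, mul_one, real_inner_self_eq_norm_sq] at h
  rw [← Real.sqrt_sq (norm_nonneg (a • v + b • u)), h]
  ring_nf

lemma inner_uvec_le_one {v x x' : E} (hv : ‖v‖ = 1) (hx : ‖x‖ = 1) (hx' : ‖x'‖ = 1)
    (hlt : ⟪x, v⟫ ^ 2 < 1) (hlt' : ⟪x', v⟫ ^ 2 < 1) : ⟪uvec v x, uvec v x'⟫ ≤ 1 := by
  have h := abs_real_inner_le_norm (uvec v x) (uvec v x')
  rw [norm_uvec hv hx hlt, norm_uvec hv hx' hlt', mul_one] at h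
  exact (abs_le.1 h).2

lemma inner_eq_decomp {v x x' : E} (hv : ‖v‖ = 1) (hx : ‖x‖ = 1) (hx' : ‖x'‖ = 1)
    (hlt : ⟪x, v⟫ ^ 2 < 1) (hlt' : ⟪x', v⟫ ^ 2 < 1) :
    ⟪x, x'⟫ = ⟪x, v⟫ * ⟪x', v⟫ +
      Real.sin (theta v x) * Real.sin (theta v x') * ⟪uvec v x, uvec v x'⟫ := by
  conv_lhs => rw [decomp hv hx hlt, decomp hv hx' hlt']
  exact inner_combo hv (inner_uvec_v hv) (inner_uvec_v hv) _ _ _ _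

lemma norm_shiftMap {v x : E} (hv : ‖v‖ = 1) (hx : ‖x‖ = 1) (hlt : ⟪x, v⟫ ^ 2 < 1) (a : ℝ) :
    ‖shiftMap v a x‖ = 1 := by
  rw [shiftMap, norm_combo hv (norm_uvec hv hx hlt) (inner_uvec_v hv),
    Real.cos_sq_add_sin_sq, Real.sqrt_one]

lemma shiftMap_dist_le {v x x' : E} (hv : ‖v‖ = 1) (hx : ‖x‖ = 1) (hx' : ‖x'‖ = 1)
    (hc : ⟪x, v⟫ ^ 2 ≤ 1 / 2) (hc' : ⟪x', v⟫ ^ 2 ≤ 1 / 2) (a : ℝ) :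
    dist (shiftMap v a x) (shiftMap v a x') ≤ 2 * dist x x' := by
  have hlt : ⟪x, v⟫ ^ 2 < 1 := lt_of_le_of_lt hc (by norm_num)
  have hlt' : ⟪x', v⟫ ^ 2 < 1 := lt_of_le_of_lt hc' (by norm_num)
  have hq1 : ⟪uvec v x, uvec v x'⟫ ≤ 1 := inner_uvec_le_one hv hx hx' hlt hlt'
  -- lower bound on the product of sines
  have hs : Real.sin (theta v x) = Real.sqrt (1 - ⟪x, v⟫ ^ 2) := Real.sin_arccos _
  have hs' : Real.sin (theta v x') = Real.sqrt (1 - ⟪x', v⟫ ^ 2) := Real.sin_arccos _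
  have hss : 1 / 2 ≤ Real.sin (theta v x) * Real.sin (theta v x') := by
    have l1 : Real.sqrt (1 / 2) ≤ Real.sin (theta v x) := by
      rw [hs]; exact Real.sqrt_le_sqrt (by linarith)
    have l2 : Real.sqrt (1 / 2) ≤ Real.sin (theta v x') := by
      rw [hs']; exact Real.sqrt_le_sqrt (by linarith)
    have l3 : (0 : ℝ) ≤ Real.sqrt (1 / 2) := Real.sqrt_nonneg _
    have l4 : Real.sqrt (1 / 2) * Real.sqrt (1 / 2) = 1 / 2 :=
      Real.mul_self_sqrt (by norm_num)
    nlinarith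
  -- the two squared-distance identities
  have e1 : dist (shiftMap v a x) (shiftMap v a x') ^ 2 =
      2 - 2 * (Real.cos (theta v x + a) * Real.cos (theta v x' + a) +
        Real.sin (theta v x + a) * Real.sin (theta v x' + a) * ⟪uvec v x, uvec v x'⟫) := by
    rw [dist_eq_norm, norm_sub_sq_unit (norm_shiftMap hv hx hlt a) (norm_shiftMap hv hx' hlt' a)]
    rw [shiftMap, shiftMap, inner_combo hv (inner_uvec_v hv) (inner_uvec_v hv)]
  have e2 : dist x x' ^ 2 = 2 - 2 * (⟪x, v⟫ * ⟪x', v⟫ +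
      Real.sin (theta v x) * Real.sin (theta v x') * ⟪uvec v x, uvec v x'⟫) := by
    rw [dist_eq_norm, norm_sub_sq_unit hx hx', inner_eq_decomp hv hx hx' hlt hlt']
  -- trigonometric identities
  have t1 : Real.cos (theta v x + a) * Real.cos (theta v x' + a) +
      Real.sin (theta v x + a) * Real.sin (theta v x' + a) =
      Real.cos (theta v x - theta v x') := by
    rw [← Real.cos_sub]; ring_nf
  have t2 : ⟪x, v⟫ * ⟪x', v⟫ + Real.sin (theta v x) * Real.sin (theta v x') =
      Real.cos (theta v x - theta v x') := by
    rw [Real.cos_sub, cos_theta hv hx, cos_theta hv hx']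
  have hcos1 : Real.cos (theta v x - theta v x') ≤ 1 := Real.cos_le_one _
  have hSS : Real.sin (theta v x + a) * Real.sin (theta v x' + a) ≤ 1 := by
    nlinarith [Real.neg_one_le_sin (theta v x + a), Real.sin_le_one (theta v x + a),
      Real.neg_one_le_sin (theta v x' + a), Real.sin_le_one (theta v x' + a)]
  have key : dist (shiftMap v a x) (shiftMap v a x') ^ 2 ≤ (2 * dist x x') ^ 2 := by
    rw [e1, mul_pow, e2]
    nlinarith [mul_nonneg (by nlinarith : (0:ℝ) ≤ 4 * (Real.sin (theta v x) * Real.sin (theta v x')) -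
      2 * (Real.sin (theta v x + a) * Real.sin (theta v x' + a)))
      (by linarith : (0:ℝ) ≤ 1 - ⟪uvec v x, uvec v x'⟫)]
  calc dist (shiftMap v a x) (shiftMap v a x') =
      Real.sqrt (dist (shiftMap v a x) (shiftMap v a x') ^ 2) :=
        (Real.sqrt_sq dist_nonneg).symm
    _ ≤ Real.sqrt ((2 * dist x x') ^ 2) := Real.sqrt_le_sqrt key
    _ = 2 * dist x x' := Real.sqrt_sq (by positivity)

lemma mem_band_inner_sq_le_half {v x : E} {β₁ β₂ : ℝ} (h1 : Real.pi / 4 ≤ β₁)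
    (h12 : β₁ ≤ β₂) (h2 : β₂ ≤ 3 * Real.pi / 4) (hx : x ∈ band v β₁ β₂) :
    ⟪x, v⟫ ^ 2 ≤ 1 / 2 := by
  have hπ := Real.pi_pos
  have c1 : Real.cos β₁ ≤ Real.cos (Real.pi / 4) :=
    Real.cos_le_cos_of_nonneg_of_le_pi (by linarith) (by linarith) h1
  have c2 : Real.cos (3 * Real.pi / 4) ≤ Real.cos β₂ :=
    Real.cos_le_cos_of_nonneg_of_le_pi (by linarith) (by linarith) h2
  have c3 : Real.cos (3 * Real.pi / 4) = -(Real.sqrt 2 / 2) := by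
    have : 3 * Real.pi / 4 = Real.pi - Real.pi / 4 := by ring
    rw [this, Real.cos_pi_sub, Real.cos_pi_div_four]
  rw [Real.cos_pi_div_four] at c1
  rw [c3] at c2
  have h3 := hx.2.1
  have h4 := hx.2.2
  nlinarith [Real.sq_sqrt (by norm_num : (0:ℝ) ≤ 2)]

lemma shiftMap_lipschitz {v : E} (hv : ‖v‖ = 1) {β₁ β₂ : ℝ} (h1 : Real.pi / 4 ≤ β₁)
    (h12 : β₁ ≤ β₂) (h2 : β₂ ≤ 3 * Real.pi / 4) (a : ℝ) :
    LipschitzOnWith 2 (shiftMap v a) (band v β₁ β₂) := by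
  rw [lipschitzOnWith_iff_dist_le_mul]
  intro x hx y hy
  have := shiftMap_dist_le hv (mem_sphere_iff_norm_one.1 hx.1) (mem_sphere_iff_norm_one.1 hy.1)
    (mem_band_inner_sq_le_half h1 h12 h2 hx) (mem_band_inner_sq_le_half h1 h12 h2 hy) a
  simpa using this

lemma eq_pole_of_inner_sq_one {v x : E} (hv : ‖v‖ = 1) (hx : ‖x‖ = 1) (h : ⟪x, v⟫ ^ 2 = 1) :
    x = v ∨ x = -v := by
  have hfac : (⟪x, v⟫ - 1) * (⟪x, v⟫ + 1) = 0 := by nlinarith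
  rcases mul_eq_zero.1 hfac with h1 | h1
  · left
    have : ‖x - v‖ ^ 2 = 0 := by rw [norm_sub_sq_unit hx hv]; nlinarith
    have := pow_eq_zero_iff (n := 2) (by norm_num) |>.1 this
    rw [norm_eq_zero, sub_eq_zero] at this
    exact this
  · right
    have : ‖x + v‖ ^ 2 = 0 := by
      rw [norm_add_sq_real, hx, hv]; nlinarith
    have := pow_eq_zero_iff (n := 2) (by norm_num) |>.1 this
    rw [norm_eq_zero] at this
    have := eq_neg_of_add_eq_zero_left this
    exact this

lemma arccos_le_arccos' {a b : ℝ} (h1 : -1 ≤ a) (h : a ≤ b) (h2 : b ≤ 1) :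
    Real.arccos b ≤ Real.arccos a := by
  rcases eq_or_lt_of_le h with rfl | hlt
  · exact le_refl _
  · exact (Real.strictAntiOn_arccos ⟨h1, le_trans hlt.le h2⟩ ⟨le_trans h1 h, h2⟩ hlt).le

lemma theta_mem_of_band {v x : E} {α₁ α₂ : ℝ} (hα₁ : 0 ≤ α₁) (hle : α₁ ≤ α₂)
    (hα₂ : α₂ ≤ Real.pi) (hx : x ∈ band v α₁ α₂) : theta v x ∈ Set.Icc α₁ α₂ := by
  obtain ⟨-, h1, h2⟩ := hx
  constructor
  · have := arccos_le_arccos' (a := ⟪x, v⟫) (b := Real.cos α₁)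
      (le_trans (Real.neg_one_le_cos α₂) h1) h2 (Real.cos_le_one _)
    rwa [Real.arccos_cos hα₁ (le_trans hle hα₂)] at this
  · have := arccos_le_arccos' (a := Real.cos α₂) (b := ⟪x, v⟫)
      (Real.neg_one_le_cos α₂) h1 (le_trans h2 (Real.cos_le_one _))
    rwa [Real.arccos_cos (le_trans hα₁ hle) hα₂] at this

lemma band_subset_image {v : E} (hv : ‖v‖ = 1) {α₁ α₂ β₁ β₂ : ℝ} (hα₁ : 0 ≤ α₁)
    (hle : α₁ ≤ α₂) (hα₂ : α₂ ≤ Real.pi) (hβ₁ : Real.pi / 4 ≤ β₁) (hβ₂ : β₂ ≤ 3 * Real.pi / 4)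
    (hw : β₂ - β₁ = α₂ - α₁) :
    band v α₁ α₂ \ {v, -v} ⊆ shiftMap v (α₁ - β₁) '' band v β₁ β₂ := by
  rintro x' ⟨hx', hpole⟩
  have hπ := Real.pi_gt_three
  have hx'S : ‖x'‖ = 1 := mem_sphere_iff_norm_one.1 hx'.1
  have hlt' : ⟪x', v⟫ ^ 2 < 1 := by
    rcases lt_or_eq_of_le (abs_le.1 (abs_inner_le_one hv hx'S)).2 with h | h
    · rcases lt_or_eq_of_le (abs_le.1 (abs_inner_le_one hv hx'S)).1 with h' | h'
      · nlinarith
      · exfalso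
        refine hpole (Or.inr ?_)
        rcases eq_pole_of_inner_sq_one hv hx'S (by nlinarith) with h'' | h''
        · exfalso; rw [h''] at h'; rw [real_inner_self_eq_norm_sq, hv] at h'; norm_num at h'
        · exact h''
    · exfalso
      refine hpole (Or.inl ?_)
      rcases eq_pole_of_inner_sq_one hv hx'S (by nlinarith) with h'' | h''
      · exact h''
      · exfalso
        rw [h''] at h
        rw [inner_neg_left, real_inner_self_eq_norm_sq, hv] at h
        norm_num at h
  obtain ⟨hθ1, hθ2⟩ := theta_mem_of_band hα₁ hle hα₂ hx'
  set β := theta v x' - α₁ + β₁ with hβ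
  have hβmem1 : β₁ ≤ β := by simp [hβ]; linarith
  have hβmem2 : β ≤ β₂ := by simp [hβ]; linarith
  have hβpos : 0 < β := by linarith
  have hβπ : β < Real.pi := by linarith
  have hsinβ : 0 < Real.sin β := Real.sin_pos_of_pos_of_lt_pi hβpos hβπ
  have hup : ‖uvec v x'‖ = 1 := norm_uvec hv hx'S hlt'
  set p := Real.cos β • v + Real.sin β • uvec v x' with hp
  have hpnorm : ‖p‖ = 1 := by
    rw [hp, norm_combo hv hup (inner_uvec_v hv), Real.cos_sq_add_sin_sq, Real.sqrt_one]
  have hpinner : ⟪p, v⟫ = Real.cos β := by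
    rw [hp, inner_add_left, real_inner_smul_left, real_inner_smul_left, inner_uvec_v hv,
      real_inner_self_eq_norm_sq, hv]
    norm_num
  have hpband : p ∈ band v β₁ β₂ := by
    refine ⟨mem_sphere_iff_norm_one.2 hpnorm, ?_, ?_⟩
    · rw [hpinner]
      exact Real.cos_le_cos_of_nonneg_of_le_pi (by linarith) (by linarith) hβmem2
    · rw [hpinner]
      exact Real.cos_le_cos_of_nonneg_of_le_pi (by linarith) (by linarith) hβmem1
  have htp : theta v p = β := by
    rw [theta, hpinner, Real.arccos_cos hβpos.le hβπ.le]
  have hwp : p - ⟪p, v⟫ • v = Real.sin β • uvec v x' := by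
    rw [hpinner, hp]; abel
  have huvp : uvec v p = uvec v x' := by
    rw [uvec, hwp, norm_smul, Real.norm_eq_abs, abs_of_pos hsinβ, hup, mul_one, smul_smul,
      inv_mul_cancel₀ hsinβ.ne', one_smul]
  refine ⟨p, hpband, ?_⟩
  have harg : theta v p + (α₁ - β₁) = theta v x' := by rw [htp]; ring
  rw [shiftMap, harg, huvp, cos_theta hv hx'S]
  exact (decomp hv hx'S hlt').symm

lemma band_measurable {v : E} {α₁ α₂ : ℝ} : MeasurableSet (band v α₁ α₂) := by
  have : band v α₁ α₂ =
      sphere (0 : E) 1 ∩ (fun x : E => ⟪x, v⟫) ⁻¹' Set.Icc (Real.cos α₂) (Real.cos α₁) := rfl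
  rw [this]
  exact (isClosed_sphere.inter (isClosed_Icc.preimage
    (Continuous.inner continuous_id continuous_const))).measurableSet

lemma band_subset_sphere {v : E} {α₁ α₂ : ℝ} : band v α₁ α₂ ⊆ S := fun _ hx => hx.1

lemma pair_null (hd : 1 ≤ d) (v : E) : μ ({v, -v} : Set E) = 0 := by
  have hpos : (0 : ℝ) < (d : ℝ) := by exact_mod_cast Nat.lt_of_lt_of_le Nat.zero_lt_one hd
  haveI := MeasureTheory.Measure.noAtoms_hausdorff (EuclideanSpace ℝ (Fin (d + 1))) hpos
  have h1 : μ ({v, -v} : Set E) ≤ μ ({v} : Set E) + μ ({-v} : Set E) := by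
    rw [Set.insert_eq]
    exact measure_union_le _ _
  simpa [measure_singleton] using h1

lemma band_measure_le (hd : 1 ≤ d) {v : E} (hv : ‖v‖ = 1) {α₁ α₂ β₁ β₂ : ℝ} (hα₁ : 0 ≤ α₁)
    (hle : α₁ ≤ α₂) (hα₂ : α₂ ≤ Real.pi) (hβ₁ : Real.pi / 4 ≤ β₁) (hβ12 : β₁ ≤ β₂)
    (hβ₂ : β₂ ≤ 3 * Real.pi / 4) (hw : β₂ - β₁ = α₂ - α₁) :
    μ (band v α₁ α₂) ≤ 2 ^ d * μ (band v β₁ β₂) := by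
  have hcoe : ((2 : NNReal) : ℝ≥0∞) ^ ((d : ℕ) : ℝ) = (2 : ℝ≥0∞) ^ d := by
    rw [ENNReal.rpow_natCast]; norm_num
  calc μ (band v α₁ α₂) ≤ μ ((shiftMap v (α₁ - β₁) '' band v β₁ β₂) ∪ {v, -v}) := by
        apply measure_mono
        intro x hx
        by_cases hpole : x ∈ ({v, -v} : Set E)
        · exact Or.inr hpole
        · exact Or.inl (band_subset_image hv hα₁ hle hα₂ hβ₁ hβ₂ hw ⟨hx, hpole⟩)
    _ ≤ μ (shiftMap v (α₁ - β₁) '' band v β₁ β₂) + μ ({v, -v} : Set E) := measure_union_le _ _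
    _ = μ (shiftMap v (α₁ - β₁) '' band v β₁ β₂) := by rw [pair_null hd v, add_zero]
    _ ≤ 2 ^ d * μ (band v β₁ β₂) := by
        rw [← hcoe]
        exact (shiftMap_lipschitz hv hβ₁ hβ12 hβ₂ (α₁ - β₁)).hausdorffMeasure_image_le
          (Nat.cast_nonneg d)

lemma eq_band_count (hd : 1 ≤ d) {v : E} (hv : ‖v‖ = 1) {δ : ℝ} (hδ0 : 0 < δ)
    (hδ1 : δ ≤ 1 / 10) {n : ℕ} (hn : 2 * δ * n ≤ 1) :
    (n : ℝ≥0∞) * μ (band v (Real.pi / 2 - δ / 2) (Real.pi / 2 + δ / 2)) ≤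
      2 ^ d * μ (sphere (0 : E) 1) := by
  have hπ := Real.pi_gt_three
  set B : ℕ → Set E := fun i => band v (Real.pi / 4 + 2 * δ * i) (Real.pi / 4 + 2 * δ * i + δ)
    with hB
  have hin : ∀ i : ℕ, i < n → (i : ℝ) + 1 ≤ n := by intro i hi; exact_mod_cast hi
  have hsub : ∀ i : ℕ, i < n → Real.pi / 4 + 2 * δ * i + δ ≤ 3 * Real.pi / 4 := by
    intro i hi
    have h1 := hin i hi
    nlinarith
  have hkey : ∀ i : ℕ, i < n →
      μ (band v (Real.pi / 2 - δ / 2) (Real.pi / 2 + δ / 2)) ≤ 2 ^ d * μ (B i) := by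
    intro i hi
    have hi0 : (0:ℝ) ≤ (i:ℝ) := Nat.cast_nonneg i
    exact band_measure_le hd hv (by nlinarith) (by nlinarith) (by nlinarith)
      (by nlinarith) (by nlinarith) (hsub i hi) (by ring)
  have hdisj : (↑(Finset.range n) : Set ℕ).PairwiseDisjoint B := by
    have key : ∀ i j : ℕ, i < j → j < n → Disjoint (B i) (B j) := by
      intro i j hij hjn
      rw [Set.disjoint_left]
      intro x hxi hxj
      have h1 : Real.cos (Real.pi / 4 + 2 * δ * i + δ) ≤ ⟪x, v⟫ := hxi.2.1
      have h2 : ⟪x, v⟫ ≤ Real.cos (Real.pi / 4 + 2 * δ * j) := hxj.2.2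
      have hij' : (i:ℝ) + 1 ≤ (j:ℝ) := by exact_mod_cast hij
      have hlt : Real.cos (Real.pi / 4 + 2 * δ * j) <
          Real.cos (Real.pi / 4 + 2 * δ * i + δ) := by
        apply Real.strictAntiOn_cos ⟨by nlinarith, by nlinarith [hsub j hjn]⟩
          ⟨by nlinarith, by nlinarith [hsub j hjn]⟩
        nlinarith
      linarith
    intro i hi j hj hne
    rcases lt_or_gt_of_ne hne with h | h
    · exact (key i j h (Finset.mem_coe.1 hj |> Finset.mem_range.1)).mono le_rfl le_rfl
    · exact ((key j i h (Finset.mem_coe.1 hi |> Finset.mem_range.1)).symm).mono le_rfl le_rfl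
  calc (n : ℝ≥0∞) * μ (band v (Real.pi / 2 - δ / 2) (Real.pi / 2 + δ / 2))
      = ∑ _i ∈ Finset.range n, μ (band v (Real.pi / 2 - δ / 2) (Real.pi / 2 + δ / 2)) := by
        rw [Finset.sum_const, Finset.card_range, nsmul_eq_mul]
    _ ≤ ∑ i ∈ Finset.range n, 2 ^ d * μ (B i) :=
        Finset.sum_le_sum fun i hi => hkey i (Finset.mem_range.1 hi)
    _ = 2 ^ d * ∑ i ∈ Finset.range n, μ (B i) := by rw [Finset.mul_sum]
    _ = 2 ^ d * μ (⋃ i ∈ Finset.range n, B i) := by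
        rw [measure_biUnion_finset hdisj fun i _ => band_measurable]
    _ ≤ 2 ^ d * μ (sphere (0 : E) 1) := by
        gcongr
        exact Set.iUnion₂_subset fun i _ => band_subset_sphere

lemma sphereMeasure_apply_aux (A : Set E) (hA : MeasurableSet A) :
    sphereMeasure d A = (μ (sphere (0 : E) 1))⁻¹ * μ (A ∩ sphere (0 : E) 1) := by
  rw [sphereMeasure, Measure.smul_apply, Measure.restrict_apply hA, smul_eq_mul]

lemma sigma_band_le (hd : 1 ≤ d) (h0 : μ (sphere (0 : E) 1) ≠ 0)
    (htop : μ (sphere (0 : E) 1) ≠ ∞) {v : E} (hv : ‖v‖ = 1) {θ₁ θ₂ : ℝ} (hθ₁ : 0 ≤ θ₁)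
    (hlt : θ₁ < θ₂) (hθ₂ : θ₂ ≤ Real.pi) (hsmall : θ₂ - θ₁ ≤ 1 / 10) :
    (sphereMeasure d (band v θ₁ θ₂)).toReal ≤ 3 * 4 ^ d * (θ₂ - θ₁) := by
  have hπ := Real.pi_gt_three
  set δ := θ₂ - θ₁ with hδdef
  have hδ0 : 0 < δ := sub_pos.2 hlt
  have step1 : μ (band v θ₁ θ₂) ≤
      2 ^ d * μ (band v (Real.pi / 2 - δ / 2) (Real.pi / 2 + δ / 2)) :=
    band_measure_le hd hv hθ₁ hlt.le hθ₂ (by nlinarith) (by nlinarith) (by nlinarith) (by ring)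
  set n := ⌊1 / (2 * δ)⌋₊ with hndef
  have hval : (5 : ℝ) ≤ 1 / (2 * δ) := by
    rw [le_div_iff₀ (by linarith)]; linarith
  have hn5 : 5 ≤ n := Nat.le_floor (by exact_mod_cast hval)
  have hnpos : (0:ℝ) < (n:ℝ) := by
    have : (5:ℝ) ≤ (n:ℝ) := by exact_mod_cast hn5
    linarith
  have hnle : (n : ℝ) ≤ 1 / (2 * δ) := Nat.floor_le (by positivity)
  have hnge : 2 / (5 * δ) ≤ (n : ℝ) := by
    have h2 : 1 / (2 * δ) - 1 < (n : ℝ) := Nat.sub_one_lt_floor _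
    have h3 : 2 / (5 * δ) = (4 / 5) * (1 / (2 * δ)) := by field_simp; ring
    rw [h3]; linarith
  have hn2 : 2 * δ * (n : ℝ) ≤ 1 := by
    have := mul_le_mul_of_nonneg_left hnle (by linarith : (0:ℝ) ≤ 2 * δ)
    calc 2 * δ * (n:ℝ) ≤ 2 * δ * (1 / (2 * δ)) := this
      _ = 1 := by field_simp
  have step2 := eq_band_count hd hv hδ0 hsmall (n := n) hn2
  have hmul : (n : ℝ≥0∞) * μ (band v θ₁ θ₂) ≤ 4 ^ d * μ (sphere (0 : E) 1) := by
    calc (n : ℝ≥0∞) * μ (band v θ₁ θ₂)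
        ≤ (n : ℝ≥0∞) * (2 ^ d * μ (band v (Real.pi / 2 - δ / 2) (Real.pi / 2 + δ / 2))) := by
          gcongr
      _ = 2 ^ d * ((n : ℝ≥0∞) * μ (band v (Real.pi / 2 - δ / 2) (Real.pi / 2 + δ / 2))) := by
          ring
      _ ≤ 2 ^ d * (2 ^ d * μ (sphere (0 : E) 1)) := by gcongr
      _ = 4 ^ d * μ (sphere (0 : E) 1) := by
          rw [← mul_assoc, ← mul_pow]; norm_num
  have hσ : sphereMeasure d (band v θ₁ θ₂) = (μ (sphere (0 : E) 1))⁻¹ * μ (band v θ₁ θ₂) := by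
    rw [sphereMeasure_apply_aux _ band_measurable,
      Set.inter_eq_self_of_subset_left band_subset_sphere]
  have hn0' : (n : ℝ≥0∞) ≠ 0 := by
    simp only [ne_eq, Nat.cast_eq_zero]
    omega
  have hmain : sphereMeasure d (band v θ₁ θ₂) ≤ 4 ^ d / (n : ℝ≥0∞) := by
    rw [ENNReal.le_div_iff_mul_le (Or.inl hn0') (Or.inl (ENNReal.natCast_ne_top n))]
    calc sphereMeasure d (band v θ₁ θ₂) * (n : ℝ≥0∞)
        = (μ (sphere (0 : E) 1))⁻¹ * ((n : ℝ≥0∞) * μ (band v θ₁ θ₂)) := by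
          rw [hσ]; ring
      _ ≤ (μ (sphere (0 : E) 1))⁻¹ * (4 ^ d * μ (sphere (0 : E) 1)) := by gcongr
      _ = 4 ^ d * ((μ (sphere (0 : E) 1))⁻¹ * μ (sphere (0 : E) 1)) := by ring
      _ = 4 ^ d := by rw [ENNReal.inv_mul_cancel h0 htop, mul_one]
  have hfin : (4 : ℝ≥0∞) ^ d / (n : ℝ≥0∞) ≠ ∞ :=
    (ENNReal.div_lt_top (ENNReal.pow_ne_top (by norm_num)) hn0').ne
  have := ENNReal.toReal_mono hfin hmain
  refine le_trans this ?_
  have htr : ((4 : ℝ≥0∞) ^ d / (n : ℝ≥0∞)).toReal = 4 ^ d / (n : ℝ) := by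
    rw [ENNReal.toReal_div, ENNReal.toReal_pow]
    simp
  rw [htr, div_le_iff₀ hnpos]
  have h5 : (1:ℝ) ≤ 2 / (5 * δ) * (3 * δ) := by
    have he : 2 / (5 * δ) * (3 * δ) = 6 / 5 := by field_simp; ring
    rw [he]; norm_num
  calc (4:ℝ) ^ d = 4 ^ d * 1 := by ring
    _ ≤ 4 ^ d * (2 / (5 * δ) * (3 * δ)) := by
        have h4 : (0:ℝ) ≤ 4 ^ d := by positivity
        nlinarith
    _ ≤ 4 ^ d * ((n:ℝ) * (3 * δ)) := by
        have h3δ : (0:ℝ) ≤ 3 * δ := by linarith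
        have h4 : (0:ℝ) ≤ 4 ^ d := by positivity
        nlinarith [mul_le_mul_of_nonneg_right hnge h3δ]
    _ = 3 * 4 ^ d * δ * (n:ℝ) := by ring

lemma arccos_triangle {v x y : E} (hv : ‖v‖ = 1) (hx : ‖x‖ = 1) (hy : ‖y‖ = 1) :
    Real.arccos ⟪x, v⟫ ≤ Real.arccos ⟪y, v⟫ + Real.arccos ⟪x, y⟫ := by
  set α := Real.arccos ⟪y, v⟫ with hα
  set γ := Real.arccos ⟪x, y⟫ with hγ
  by_cases hcase : α + γ ≤ Real.pi
  · have hxv := abs_le.1 (abs_inner_le_one hv hx)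
    have hyv := abs_le.1 (abs_inner_le_one hv hy)
    have hxy := abs_le.1 (abs_inner_le_one hy hx)
    have hkey : Real.cos (α + γ) ≤ ⟪x, v⟫ := by
      rw [Real.cos_add]
      have hcα : Real.cos α = ⟪y, v⟫ := Real.cos_arccos hyv.1 hyv.2
      have hcγ : Real.cos γ = ⟪x, y⟫ := Real.cos_arccos hxy.1 hxy.2
      have hsα : Real.sin α = Real.sqrt (1 - ⟪y, v⟫ ^ 2) := Real.sin_arccos _
      have hsγ : Real.sin γ = Real.sqrt (1 - ⟪x, y⟫ ^ 2) := Real.sin_arccos _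
      have hcs := abs_real_inner_le_norm (x - ⟪x, y⟫ • y) (v - ⟪v, y⟫ • y)
      have hexp : ⟪x - ⟪x, y⟫ • y, v - ⟪v, y⟫ • y⟫ = ⟪x, v⟫ - ⟪x, y⟫ * ⟪y, v⟫ := by
        rw [inner_sub_left, inner_sub_right, inner_sub_right, real_inner_smul_right,
          real_inner_smul_left, real_inner_smul_left, real_inner_smul_right,
          real_inner_self_eq_norm_sq, hy, real_inner_comm v y]
        ring
      have hn1 : ‖x - ⟪x, y⟫ • y‖ = Real.sqrt (1 - ⟪x, y⟫ ^ 2) := by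
        rw [← norm_wvec_sq hy hx, Real.sqrt_sq (norm_nonneg _)]
      have hn2 : ‖v - ⟪v, y⟫ • y‖ = Real.sqrt (1 - ⟪y, v⟫ ^ 2) := by
        have hcomm : (⟪y, v⟫ : ℝ) = ⟪v, y⟫ := real_inner_comm _ _
        rw [hcomm, ← norm_wvec_sq hy hv, Real.sqrt_sq (norm_nonneg _)]
      rw [hexp, hn1, hn2] at hcs
      have := (abs_le.1 hcs).1
      rw [hcα, hcγ, hsα, hsγ]
      nlinarith [this]
    have h2 := arccos_le_arccos' (a := Real.cos (α + γ)) (b := ⟪x, v⟫)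
      (Real.neg_one_le_cos _) hkey hxv.2
    rwa [Real.arccos_cos (add_nonneg (Real.arccos_nonneg _) (Real.arccos_nonneg _)) hcase] at h2
  · push_neg at hcase
    exact le_trans (Real.arccos_le_pi _) hcase.le

lemma arccos_le_two_norm {x y : E} (hx : ‖x‖ = 1) (hy : ‖y‖ = 1) (hsmall : ‖x - y‖ ≤ 1) :
    Real.arccos ⟪x, y⟫ ≤ 2 * ‖x - y‖ := by
  set θ := Real.arccos ⟪x, y⟫ with hθdef
  have hb := abs_le.1 (abs_inner_le_one hy hx)
  have hθ0 : 0 ≤ θ := Real.arccos_nonneg _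
  have hθπ : θ ≤ Real.pi := Real.arccos_le_pi _
  have hπ := Real.pi_pos
  have hcos : Real.cos θ = ⟪x, y⟫ := Real.cos_arccos hb.1 hb.2
  have hns : ‖x - y‖ ^ 2 = 2 - 2 * Real.cos θ := by
    rw [hcos, norm_sub_sq_unit hx hy]
  have hsin : Real.sin (θ / 2) = ‖x - y‖ / 2 := by
    rw [Real.sin_half_eq_sqrt (by linarith) (by linarith)]
    rw [show (1 - Real.cos θ) / 2 = (‖x - y‖ / 2) ^ 2 by rw [div_pow]; rw [hns]; ring]
    exact Real.sqrt_sq (by positivity)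
  have ht1 : θ / 2 ≤ 1 := by
    by_contra hcon
    push_neg at hcon
    have hpi1 : -(Real.pi / 2) ≤ (1 : ℝ) := by nlinarith
    have hpi2 : θ / 2 ≤ Real.pi / 2 := by linarith
    have hs1 : Real.sin 1 ≤ Real.sin (θ / 2) :=
      Real.sin_le_sin_of_le_of_le_pi_div_two hpi1 hpi2 hcon.le
    have hs2 : (3 : ℝ) / 4 < Real.sin 1 := by
      have := Real.sin_gt_sub_cube one_pos
      norm_num at this
      linarith
    rw [hsin] at hs1
    linarith
  rcases eq_or_lt_of_le hθ0 with h0 | h0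
  · rw [← h0]; positivity
  · have hgt := Real.sin_gt_sub_cube (by linarith : (0:ℝ) < θ / 2)
    have h02 : (0:ℝ) ≤ θ / 2 := by linarith
    have hsq : (θ / 2) ^ 2 ≤ 1 := by nlinarith
    have hcube : (θ / 2) ^ 3 ≤ θ / 2 := by nlinarith [mul_le_mul_of_nonneg_right hsq h02]
    rw [hsin] at hgt
    nlinarith

lemma sphereMeasure_univ_aux (h0 : μ (sphere (0 : E) 1) ≠ 0)
    (htop : μ (sphere (0 : E) 1) ≠ ∞) :
    sphereMeasure d (Set.univ : Set E) = 1 := by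
  rw [sphereMeasure_apply_aux _ MeasurableSet.univ, Set.univ_inter,
    ENNReal.inv_mul_cancel h0 htop]

end CapDiscAux

set_option maxHeartbeats 2000000 in
/-- Point sets drawn from a diameter-bounded equal-area partition of `S^d` have spherical cap
discrepancy at most `C · N^{-1/d}`, with `C` depending only on `d` and the diameter constant. -/
theorem capDiscrepancy_le_of_diameter_bounded_equal_area_partition
    (d : ℕ) (hd : 1 ≤ d) (c : ℝ) (hc : 0 < c) :
    ∃ C : ℝ, 0 < C ∧ ∀ N : ℕ, 0 < N →
      ∀ R : Fin N → Set (EuclideanSpace ℝ (Fin (d + 1))),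
        (∀ i, MeasurableSet (R i)) →
        Pairwise (Function.onFun Disjoint R) →
        (⋃ i, R i) = sphere (0 : EuclideanSpace ℝ (Fin (d + 1))) 1 →
        (∀ i, sphereMeasure d (R i) = 1 / (N : ℝ≥0∞)) →
        (∀ i, Metric.diam (R i) ≤ c * (N : ℝ) ^ (-(1 : ℝ) / d)) →
        ∀ x : Fin N → EuclideanSpace ℝ (Fin (d + 1)),
          (∀ i, x i ∈ R i) →
          capDiscrepancy d (Finset.univ.image x) ≤ C * (N : ℝ) ^ (-(1 : ℝ) / d) := by
  classical
  have hCpos : (0:ℝ) < (40 + 12 * 4 ^ d) * c + 1 := by positivity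
  refine ⟨(40 + 12 * 4 ^ d) * c + 1, hCpos, ?_⟩
  intro N hN R mR hdisj hcover hmeas hdiam x hx
  have hNpos : (0:ℝ) < (N:ℝ) := by exact_mod_cast hN
  have hNRpos : (0:ℝ) < (N : ℝ) ^ (-(1 : ℝ) / d) := Real.rpow_pos_of_pos hNpos _
  have hRHSpos : (0:ℝ) < ((40 + 12 * 4 ^ d) * c + 1) * ((N : ℝ) ^ (-(1 : ℝ) / d)) :=
    mul_pos hCpos hNRpos
  set NR : ℝ := (N : ℝ) ^ (-(1:ℝ)/d) with hNR
  set ε := c * NR with hε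
  have hεpos : 0 < ε := mul_pos hc hNRpos
  have hεdiam : ∀ i, Metric.diam (R i) ≤ ε := hdiam
  -- points and regions live on the sphere
  have hxiS : ∀ i, x i ∈ sphere (0 : EuclideanSpace ℝ (Fin (d+1))) 1 := by
    intro i
    rw [← hcover]
    exact Set.mem_iUnion.2 ⟨i, hx i⟩
  have hRS : ∀ i, R i ⊆ sphere (0 : EuclideanSpace ℝ (Fin (d+1))) 1 := by
    intro i
    rw [← hcover]
    exact Set.subset_iUnion R i
  -- the Hausdorff measure of the sphere is nondegenerate
  have hNe : (1 : ℝ≥0∞) / (N:ℝ≥0∞) ≠ 0 := by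
    simp [ENNReal.div_eq_zero_iff]
  have hNcast0 : (N:ℝ≥0∞) ≠ 0 := Nat.cast_ne_zero.2 hN.ne'
  set i0 : Fin N := ⟨0, hN⟩ with hi0
  have h0 : μH[(d:ℝ)] (sphere (0 : EuclideanSpace ℝ (Fin (d+1))) 1) ≠ 0 := by
    intro h
    have h1 := hmeas i0
    rw [CapDiscAux.sphereMeasure_apply_aux _ (mR i0)] at h1
    have h2 : μH[(d:ℝ)] (R i0 ∩ sphere (0 : EuclideanSpace ℝ (Fin (d+1))) 1) = 0 :=
      le_antisymm (h ▸ measure_mono Set.inter_subset_right) zero_le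
    rw [h2, mul_zero] at h1
    exact hNe h1.symm
  have htop : μH[(d:ℝ)] (sphere (0 : EuclideanSpace ℝ (Fin (d+1))) 1) ≠ ∞ := by
    intro h
    have h1 := hmeas i0
    rw [CapDiscAux.sphereMeasure_apply_aux _ (mR i0), h, ENNReal.inv_top, zero_mul] at h1
    exact hNe h1.symm
  have hσuniv := CapDiscAux.sphereMeasure_univ_aux (d := d) h0 htop
  have hcaple : ∀ A : Set (EuclideanSpace ℝ (Fin (d+1))), sphereMeasure d A ≤ 1 := by
    intro A
    rw [← hσuniv]
    exact measure_mono (Set.subset_univ A)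
  have hinj : Function.Injective x := by
    intro i j hij
    by_contra hne
    exact Set.disjoint_left.1 (hdisj hne) (hx i) (hij ▸ hx j)
  have hcard : (Finset.univ.image x).card = N := by
    rw [Finset.card_image_of_injective _ hinj, Finset.card_univ, Fintype.card_fin]
  unfold capDiscrepancy
  apply Real.sSup_le
  swap
  · exact hRHSpos.le
  rintro r ⟨v, t, hv, rfl⟩
  rw [hcard]
  have hfilter : ((Finset.univ.image x).filter fun z => t ≤ ⟪z, v⟫).card
      = (Finset.univ.filter fun i => t ≤ ⟪x i, v⟫).card := by
    rw [Finset.filter_image, Finset.card_image_of_injective _ hinj]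
  rw [hfilter]
  by_cases ht1 : 1 < t
  · -- the cap is empty
    have hcap : sphericalCap d v t = ∅ := by
      ext z
      simp only [sphericalCap, Set.mem_setOf_eq, Set.mem_empty_iff_false, iff_false, not_and]
      intro hzS
      have h2 := (abs_le.1 (CapDiscAux.abs_inner_le_one hv
        (CapDiscAux.mem_sphere_iff_norm_one.1 hzS))).2
      linarith
    have hfe : (Finset.univ.filter fun i => t ≤ ⟪x i, v⟫) = ∅ := by
      rw [Finset.filter_eq_empty_iff]
      intro i _
      have h2 := (abs_le.1 (CapDiscAux.abs_inner_le_one hv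
        (CapDiscAux.mem_sphere_iff_norm_one.1 (hxiS i)))).2
      intro hcon
      linarith
    rw [hcap, hfe]
    simp only [Finset.card_empty, Nat.cast_zero, zero_div, measure_empty, ENNReal.toReal_zero,
      sub_zero, abs_zero, sub_self]
    exact hRHSpos.le
  by_cases ht2 : t < -1
  · -- the cap is the whole sphere
    have hcap : sphericalCap d v t = sphere (0 : EuclideanSpace ℝ (Fin (d+1))) 1 := by
      ext z
      simp only [sphericalCap, Set.mem_setOf_eq]
      constructor
      · exact fun h => h.1
      · intro hz
        refine ⟨hz, ?_⟩
        have h2 := (abs_le.1 (CapDiscAux.abs_inner_le_one hv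
          (CapDiscAux.mem_sphere_iff_norm_one.1 hz))).1
        linarith
    have hfe : (Finset.univ.filter fun i => t ≤ ⟪x i, v⟫) = Finset.univ := by
      rw [Finset.filter_true_of_mem]
      intro i _
      have h2 := (abs_le.1 (CapDiscAux.abs_inner_le_one hv
        (CapDiscAux.mem_sphere_iff_norm_one.1 (hxiS i)))).1
      linarith
    have hcapS : sphereMeasure d (sphericalCap d v t) = 1 := by
      rw [hcap, CapDiscAux.sphereMeasure_apply_aux _ isClosed_sphere.measurableSet,
        Set.inter_self, ENNReal.inv_mul_cancel h0 htop]
    rw [hfe, hcapS]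
    simp only [Finset.card_univ, Fintype.card_fin, ENNReal.toReal_one]
    rw [div_self hNpos.ne']
    simp only [sub_self, abs_zero]
    exact hRHSpos.le
  push_neg at ht1 ht2
  -- now -1 ≤ t ≤ 1
  by_cases hεs : ¬ (ε ≤ 1/40)
  · -- crude bound: the discrepancy is at most 1
    push_neg at hεs
    have ha1 : ((Finset.univ.filter fun i => t ≤ ⟪x i, v⟫).card : ℝ) ≤ (N:ℝ) := by
      have := Finset.card_filter_le Finset.univ (fun i : Fin N => t ≤ ⟪x i, v⟫)
      have h2 : (Finset.univ : Finset (Fin N)).card = N := by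
        rw [Finset.card_univ, Fintype.card_fin]
      exact_mod_cast h2 ▸ this
    have hb1 : (sphereMeasure d (sphericalCap d v t)).toReal ≤ 1 := by
      have := ENNReal.toReal_mono (by norm_num : (1:ℝ≥0∞) ≠ ∞) (hcaple (sphericalCap d v t))
      simpa using this
    have hb0 : (0:ℝ) ≤ (sphereMeasure d (sphericalCap d v t)).toReal := ENNReal.toReal_nonneg
    have ha0 : (0:ℝ) ≤ ((Finset.univ.filter fun i => t ≤ ⟪x i, v⟫).card : ℝ) / (N:ℝ) := by
      positivity
    have ha1' : ((Finset.univ.filter fun i => t ≤ ⟪x i, v⟫).card : ℝ) / (N:ℝ) ≤ 1 :=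
      (div_le_one hNpos).2 ha1
    have habs : |((Finset.univ.filter fun i => t ≤ ⟪x i, v⟫).card : ℝ) / (N:ℝ) -
        (sphereMeasure d (sphericalCap d v t)).toReal| ≤ 1 := by
      rw [abs_le]
      constructor <;> linarith
    refine habs.trans ?_
    have h4 : (0:ℝ) < 4 ^ d := by positivity
    have h40 : (1:ℝ) ≤ 40 * ε := by linarith
    have hexp : ((40 + 12 * 4 ^ d) * c + 1) * NR = 40 * ε + 12 * 4 ^ d * ε + NR := by
      rw [hε]; ring
    rw [hexp]
    nlinarith
  push_neg at hεs
  -- MAIN CASE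
  set θt := Real.arccos t with hθt
  have hθt0 : 0 ≤ θt := Real.arccos_nonneg _
  have hθtπ : θt ≤ Real.pi := Real.arccos_le_pi _
  set θ₁ := max (θt - 2*ε) 0 with hθ₁
  set θ₂ := min (θt + 2*ε) Real.pi with hθ₂
  have hθ₁0 : 0 ≤ θ₁ := le_max_right _ _
  have hθ₂π : θ₂ ≤ Real.pi := min_le_right _ _
  have hθ₁le : θ₁ ≤ θt := max_le (by linarith) hθt0
  have hθ₂ge : θt ≤ θ₂ := le_min (by linarith) hθtπ
  have hθlt : θ₁ < θ₂ := by
    rcases lt_or_eq_of_le hθtπ with h | h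
    · have h2 : θt < θ₂ := lt_min (by linarith) h
      linarith
    · have h2 : θ₁ < Real.pi := max_lt (by linarith [Real.pi_pos]) Real.pi_pos
      have h3 : θ₂ = Real.pi := by
        rw [hθ₂, h]
        exact min_eq_right (by linarith)
      linarith
  have hθdiff : θ₂ - θ₁ ≤ 4*ε := by
    have h1 : θt - 2*ε ≤ θ₁ := le_max_left _ _
    have h2 : θ₂ ≤ θt + 2*ε := min_le_left _ _
    linarith
  have hθsmall : θ₂ - θ₁ ≤ 1/10 := by linarith
  set H := {z : EuclideanSpace ℝ (Fin (d+1)) | t ≤ ⟪z, v⟫} with hH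
  have mH : MeasurableSet H :=
    (isClosed_le continuous_const (Continuous.inner continuous_id continuous_const)).measurableSet
  have hcapU : sphericalCap d v t = ⋃ i, (R i ∩ H) := by
    rw [← Set.iUnion_inter, hcover]
    rfl
  have hdisj2 : Pairwise (Function.onFun Disjoint fun i => R i ∩ H) := by
    intro i j hij
    exact (hdisj hij).mono Set.inter_subset_left Set.inter_subset_left
  have hσsum : sphereMeasure d (sphericalCap d v t) = ∑ i, sphereMeasure d (R i ∩ H) := by
    rw [hcapU, measure_iUnion hdisj2 (fun i => (mR i).inter mH), tsum_fintype]
  have hfinle : ∀ i, sphereMeasure d (R i ∩ H) ≤ 1/(N:ℝ≥0∞) := by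
    intro i
    rw [← hmeas i]
    exact measure_mono Set.inter_subset_left
  have h1Ntop : (1:ℝ≥0∞)/(N:ℝ≥0∞) ≠ ∞ := by
    rw [one_div]
    exact ENNReal.inv_ne_top.2 hNcast0
  have hfintop : ∀ i, sphereMeasure d (R i ∩ H) ≠ ∞ :=
    fun i => ((hfinle i).trans_lt (lt_top_iff_ne_top.2 h1Ntop)).ne
  have h1NtoReal : ((1:ℝ≥0∞)/(N:ℝ≥0∞)).toReal = 1/(N:ℝ) := by
    rw [ENNReal.toReal_div]
    simp
  have hσtoReal : (sphereMeasure d (sphericalCap d v t)).toReal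
      = ∑ i, (sphereMeasure d (R i ∩ H)).toReal := by
    rw [hσsum, ENNReal.toReal_sum (fun i _ => hfintop i)]
  have hcount : ((Finset.univ.filter fun i => t ≤ ⟪x i, v⟫).card : ℝ)
      = ∑ i, (if t ≤ ⟪x i, v⟫ then (1:ℝ) else 0) := by
    rw [Finset.card_filter]
    push_cast
    rfl
  have hdiffsum : ((Finset.univ.filter fun i => t ≤ ⟪x i, v⟫).card : ℝ)/(N:ℝ)
      - (sphereMeasure d (sphericalCap d v t)).toReal
      = ∑ i, ((if t ≤ ⟪x i, v⟫ then (1:ℝ) else 0)/(N:ℝ)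
          - (sphereMeasure d (R i ∩ H)).toReal) := by
    rw [Finset.sum_sub_distrib, ← Finset.sum_div, ← hcount, ← hσtoReal]
  set bad := Finset.univ.filter
    (fun i => (R i ∩ H).Nonempty ∧ (R i ∩ Hᶜ).Nonempty) with hbad
  have hF0 : ∀ i ∈ Finset.univ, i ∉ bad →
      (if t ≤ ⟪x i, v⟫ then (1:ℝ) else 0)/(N:ℝ) - (sphereMeasure d (R i ∩ H)).toReal = 0 := by
    intro i _ hib
    have hib' : ¬((R i ∩ H).Nonempty ∧ (R i ∩ Hᶜ).Nonempty) := by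
      intro hcontra
      exact hib (Finset.mem_filter.2 ⟨Finset.mem_univ i, hcontra⟩)
    rw [not_and_or] at hib'
    rcases hib' with h1 | h1
    · rw [Set.not_nonempty_iff_eq_empty] at h1
      have hxH : ¬ t ≤ ⟪x i, v⟫ := by
        intro hcon
        exact Set.notMem_empty (x i) (h1 ▸ Set.mem_inter (hx i) hcon)
      rw [if_neg hxH, h1, measure_empty, zero_div]
      simp
    · rw [Set.not_nonempty_iff_eq_empty] at h1
      have hsub : R i ∩ H = R i := by
        apply Set.inter_eq_self_of_subset_left
        intro z hz
        by_contra hzH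
        exact Set.notMem_empty z (h1 ▸ Set.mem_inter hz hzH)
      have hxiH : t ≤ ⟪x i, v⟫ := by
        by_contra hcon
        exact Set.notMem_empty (x i) (h1 ▸ Set.mem_inter (hx i) hcon)
      rw [if_pos hxiH, hsub, hmeas i, h1NtoReal]
      ring
  have hsumbad : ∑ i, ((if t ≤ ⟪x i, v⟫ then (1:ℝ) else 0)/(N:ℝ)
        - (sphereMeasure d (R i ∩ H)).toReal)
      = ∑ i ∈ bad, ((if t ≤ ⟪x i, v⟫ then (1:ℝ) else 0)/(N:ℝ)
        - (sphereMeasure d (R i ∩ H)).toReal) :=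
    (Finset.sum_subset (Finset.subset_univ bad) hF0).symm
  have hterm : ∀ i ∈ bad, |(if t ≤ ⟪x i, v⟫ then (1:ℝ) else 0)/(N:ℝ)
      - (sphereMeasure d (R i ∩ H)).toReal| ≤ (sphereMeasure d (R i)).toReal := by
    intro i _
    have h1 : (0:ℝ) ≤ (sphereMeasure d (R i ∩ H)).toReal := ENNReal.toReal_nonneg
    have h2 : (sphereMeasure d (R i ∩ H)).toReal ≤ 1/(N:ℝ) := by
      rw [← h1NtoReal]
      exact ENNReal.toReal_mono h1Ntop (hfinle i)
    have h3 : (sphereMeasure d (R i)).toReal = 1/(N:ℝ) := by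
      rw [hmeas i, h1NtoReal]
    rw [h3, abs_le]
    have h4 : (0:ℝ) ≤ (if t ≤ ⟪x i, v⟫ then (1:ℝ) else 0) := by split <;> norm_num
    have h5 : (if t ≤ ⟪x i, v⟫ then (1:ℝ) else 0) ≤ 1 := by split <;> norm_num
    have h6 : (0:ℝ) ≤ (if t ≤ ⟪x i, v⟫ then (1:ℝ) else 0)/(N:ℝ) := by positivity
    have h7 : (if t ≤ ⟪x i, v⟫ then (1:ℝ) else 0)/(N:ℝ) ≤ 1/(N:ℝ) := by
      gcongr
    constructor <;> linarith
  have hbadband : ∀ i ∈ bad, R i ⊆ CapDiscAux.band v θ₁ θ₂ := by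
    intro i hib z hz
    rw [hbad, Finset.mem_filter] at hib
    obtain ⟨-, ⟨y, hyR, hyH⟩, ⟨w, hwR, hwH⟩⟩ := hib
    have hzS := CapDiscAux.mem_sphere_iff_norm_one.1 (hRS i hz)
    have hyS := CapDiscAux.mem_sphere_iff_norm_one.1 (hRS i hyR)
    have hwS := CapDiscAux.mem_sphere_iff_norm_one.1 (hRS i hwR)
    have hbdd : Bornology.IsBounded (R i) := isBounded_sphere.subset (hRS i)
    have hdzy : ‖z - y‖ ≤ ε := by
      rw [← dist_eq_norm]
      exact (Metric.dist_le_diam_of_mem hbdd hz hyR).trans (hεdiam i)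
    have hdzw : ‖z - w‖ ≤ ε := by
      rw [← dist_eq_norm]
      exact (Metric.dist_le_diam_of_mem hbdd hz hwR).trans (hεdiam i)
    have ha1 : Real.arccos ⟪z, y⟫ ≤ 2*ε := by
      have h := CapDiscAux.arccos_le_two_norm hzS hyS (by linarith)
      linarith
    have ha2 : Real.arccos ⟪w, z⟫ ≤ 2*ε := by
      have h := CapDiscAux.arccos_le_two_norm hwS hzS (by rw [norm_sub_rev]; linarith)
      have hn : ‖w - z‖ = ‖z - w‖ := norm_sub_rev _ _
      rw [hn] at h
      linarith
    have hyv := abs_le.1 (CapDiscAux.abs_inner_le_one hv hyS)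
    have hwv := abs_le.1 (CapDiscAux.abs_inner_le_one hv hwS)
    have hzv := abs_le.1 (CapDiscAux.abs_inner_le_one hv hzS)
    have hyθ : Real.arccos ⟪y, v⟫ ≤ θt := by
      rw [hθt]
      exact CapDiscAux.arccos_le_arccos' ht2 hyH hyv.2
    have hwθ : θt ≤ Real.arccos ⟪w, v⟫ := by
      rw [hθt]
      refine CapDiscAux.arccos_le_arccos' hwv.1 ?_ ht1
      exact le_of_not_ge (by simpa [hH] using hwH)
    have htri1 := CapDiscAux.arccos_triangle hv hzS hyS
    have htri2 := CapDiscAux.arccos_triangle hv hwS hzS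
    have hz1 : θ₁ ≤ Real.arccos ⟪z, v⟫ := max_le (by linarith) (Real.arccos_nonneg _)
    have hz2 : Real.arccos ⟪z, v⟫ ≤ θ₂ := le_min (by linarith) (Real.arccos_le_pi _)
    refine ⟨hRS i hz, ?_, ?_⟩
    · have h := Real.cos_le_cos_of_nonneg_of_le_pi (Real.arccos_nonneg ⟪z, v⟫) hθ₂π hz2
      rwa [Real.cos_arccos hzv.1 hzv.2] at h
    · have h := Real.cos_le_cos_of_nonneg_of_le_pi hθ₁0 (Real.arccos_le_pi ⟪z, v⟫) hz1
      rwa [Real.cos_arccos hzv.1 hzv.2] at h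
  have hmeasbad : ∑ i ∈ bad, (sphereMeasure d (R i)).toReal
      = (sphereMeasure d (⋃ i ∈ bad, R i)).toReal := by
    rw [measure_biUnion_finset (fun i _ j _ hij => hdisj hij) (fun i _ => mR i)]
    rw [ENNReal.toReal_sum (fun i _ => by rw [hmeas i]; exact h1Ntop)]
  have hbandtop : sphereMeasure d (CapDiscAux.band v θ₁ θ₂) ≠ ∞ :=
    ((hcaple _).trans_lt ENNReal.one_lt_top).ne
  have hle2 : (sphereMeasure d (⋃ i ∈ bad, R i)).toReal
      ≤ (sphereMeasure d (CapDiscAux.band v θ₁ θ₂)).toReal :=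
    ENNReal.toReal_mono hbandtop (measure_mono (Set.iUnion₂_subset hbadband))
  have hσband := CapDiscAux.sigma_band_le hd h0 htop hv hθ₁0 hθlt hθ₂π hθsmall
  calc |((Finset.univ.filter fun i => t ≤ ⟪x i, v⟫).card : ℝ)/(N:ℝ)
      - (sphereMeasure d (sphericalCap d v t)).toReal|
      = |∑ i ∈ bad, ((if t ≤ ⟪x i, v⟫ then (1:ℝ) else 0)/(N:ℝ)
          - (sphereMeasure d (R i ∩ H)).toReal)| := by rw [hdiffsum, hsumbad]
    _ ≤ ∑ i ∈ bad, |(if t ≤ ⟪x i, v⟫ then (1:ℝ) else 0)/(N:ℝ)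
          - (sphereMeasure d (R i ∩ H)).toReal| := Finset.abs_sum_le_sum_abs _ _
    _ ≤ ∑ i ∈ bad, (sphereMeasure d (R i)).toReal := Finset.sum_le_sum hterm
    _ = (sphereMeasure d (⋃ i ∈ bad, R i)).toReal := hmeasbad
    _ ≤ (sphereMeasure d (CapDiscAux.band v θ₁ θ₂)).toReal := hle2
    _ ≤ 3 * 4 ^ d * (θ₂ - θ₁) := hσband
    _ ≤ 3 * 4 ^ d * (4 * ε) := by
        have h4 : (0:ℝ) ≤ 3 * 4 ^ d := by positivity
        nlinarith
    _ ≤ ((40 + 12 * 4 ^ d) * c + 1) * NR := by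
        have h4 : (0:ℝ) < 4 ^ d := by positivity
        have hexp : ((40 + 12 * 4 ^ d) * c + 1) * NR = 40 * ε + 12 * 4 ^ d * ε + NR := by
          rw [hε]; ring
        rw [hexp, hε]
        nlinarith
end

section
/- Let d ≥ 1 and c > 0. There exists a constant K > 0, depending only on d and c, such that for every positive integer N the following holds: if R_1, …, R_N is a partition of S^d into N pairwise disjoint Borel measurable regions, each of σ-measure 1/N and each of Euclidean diameter at most c · N^{-1/d}, then for every spherical cap C ⊂ S^d, the number of indices i such that R_i intersects both C and the complement of C in S^d is at most K · N^{(d-1)/d}. -/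
open MeasureTheory Metric
open scoped ENNReal RealInnerProductSpace

open scoped Classical


open Module in
theorem existsUnitOrth {d : ℕ} (hd : 1 ≤ d) (v : EuclideanSpace ℝ (Fin (d + 1)))
    (hv : ‖v‖ = 1) : ∃ u : EuclideanSpace ℝ (Fin (d + 1)), ‖u‖ = 1 ∧ ⟪u, v⟫ = 0 := by
  have hv0 : v ≠ 0 := by intro h; rw [h, norm_zero] at hv; norm_num at hv
  have hdim : finrank ℝ (EuclideanSpace ℝ (Fin (d + 1))) = d + 1 := finrank_euclideanSpace_fin
  have hne : (ℝ ∙ v) ≠ ⊤ := by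
    intro h
    have h1 : finrank ℝ (ℝ ∙ v) = d + 1 := by rw [h, finrank_top, hdim]
    rw [finrank_span_singleton hv0] at h1
    omega
  obtain ⟨x, hx⟩ : ∃ x, x ∉ (ℝ ∙ v) := by
    by_contra h
    push_neg at h
    exact hne (Submodule.eq_top_iff'.2 h)
  set u₀ : EuclideanSpace ℝ (Fin (d + 1)) := x - ⟪x, v⟫ • v with hu₀
  have hu₀0 : u₀ ≠ 0 := by
    intro h
    apply hx
    have : x = ⟪x, v⟫ • v := by
      have := sub_eq_zero.1 h
      linear_combination (norm := module) this
    rw [this]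
    exact Submodule.smul_mem _ _ (Submodule.mem_span_singleton_self v)
  have horth : ⟪u₀, v⟫ = 0 := by
    rw [hu₀, inner_sub_left, real_inner_smul_left, real_inner_self_eq_norm_sq, hv]
    ring
  refine ⟨‖u₀‖⁻¹ • u₀, ?_, ?_⟩
  · rw [norm_smul, norm_inv, norm_norm, inv_mul_cancel₀ (norm_ne_zero_iff.2 hu₀0)]
  · rw [real_inner_smul_left, horth, mul_zero]

theorem arccosAntitone {x y : ℝ} (h : x ≤ y) : Real.arccos y ≤ Real.arccos x := by
  unfold Real.arccos
  have := Real.monotone_arcsin h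
  linarith

set_option maxHeartbeats 1000000 in

set_option maxHeartbeats 1000000 in
theorem boundaryPoint {d : ℕ} (hd : 1 ≤ d) (v p q : EuclideanSpace ℝ (Fin (d + 1)))
    (hv : ‖v‖ = 1) (hp : ‖p‖ = 1) (hq : ‖q‖ = 1) (t : ℝ)
    (htp : t ≤ ⟪p, v⟫) (hqt : ⟪q, v⟫ ≤ t) :
    ∃ y : EuclideanSpace ℝ (Fin (d + 1)), ‖y‖ = 1 ∧ ⟪y, v⟫ = t ∧ dist p y ≤ dist p q := by
  set a : ℝ := ⟪p, v⟫ with ha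
  set b : ℝ := ⟪q, v⟫ with hb
  have ha1 : |a| ≤ 1 := by
    rw [ha]
    calc |⟪p, v⟫| ≤ ‖p‖ * ‖v‖ := abs_real_inner_le_norm p v
    _ = 1 := by rw [hp, hv, mul_one]
  have hb1 : |b| ≤ 1 := by
    rw [hb]
    calc |⟪q, v⟫| ≤ ‖q‖ * ‖v‖ := abs_real_inner_le_norm q v
    _ = 1 := by rw [hq, hv, mul_one]
  rw [abs_le] at ha1 hb1
  have ht1 : -1 ≤ t ∧ t ≤ 1 := ⟨le_trans hb1.1 hqt, le_trans htp ha1.2⟩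
  -- find a unit vector u orthogonal to v with p = a • v + √(1-a²) • u
  have hexu : ∃ u : EuclideanSpace ℝ (Fin (d + 1)), ‖u‖ = 1 ∧ ⟪u, v⟫ = 0 ∧
      p = a • v + Real.sqrt (1 - a ^ 2) • u := by
    by_cases hp' : p - a • v = 0
    · obtain ⟨u, hu1, hu2⟩ := existsUnitOrth hd v hv
      refine ⟨u, hu1, hu2, ?_⟩
      have ha2 : a ^ 2 = 1 := by
        have : p = a • v := by
          have := sub_eq_zero.1 hp'
          linear_combination (norm := module) this
        have h2 : ‖p‖ = |a| * ‖v‖ := by rw [this, norm_smul]; rfl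
        rw [hp, hv, mul_one] at h2
        rw [← sq_abs, ← h2, one_pow]
      rw [ha2, sub_self, Real.sqrt_zero, zero_smul, add_zero]
      have := sub_eq_zero.1 hp'
      linear_combination (norm := module) this
    · set u₀ := p - a • v with hu₀
      have horth : ⟪u₀, v⟫ = 0 := by
        rw [hu₀, inner_sub_left, real_inner_smul_left, real_inner_self_eq_norm_sq, hv]
        ring
      have hnu₀ : ‖u₀‖ ^ 2 = 1 - a ^ 2 := by
        rw [hu₀, norm_sub_sq_real, real_inner_smul_right, norm_smul, hp, hv,
          Real.norm_eq_abs, mul_one, one_pow]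
        nlinarith [sq_abs a]
      have hnu₀' : ‖u₀‖ = Real.sqrt (1 - a ^ 2) := by
        rw [← hnu₀, Real.sqrt_sq (norm_nonneg _)]
      refine ⟨‖u₀‖⁻¹ • u₀, ?_, ?_, ?_⟩
      · rw [norm_smul, norm_inv, norm_norm, inv_mul_cancel₀ (norm_ne_zero_iff.2 hp')]
      · rw [real_inner_smul_left, horth, mul_zero]
      · rw [← hnu₀', smul_smul, mul_inv_cancel₀ (norm_ne_zero_iff.2 hp'), one_smul, hu₀]
        module
  obtain ⟨u, hu1, hu2, hpu⟩ := hexu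
  set sa : ℝ := Real.sqrt (1 - a ^ 2) with hsa
  set st : ℝ := Real.sqrt (1 - t ^ 2) with hst
  have hsa2 : sa ^ 2 = 1 - a ^ 2 := Real.sq_sqrt (by nlinarith [ha1.1, ha1.2])
  have hst2 : st ^ 2 = 1 - t ^ 2 := Real.sq_sqrt (by nlinarith [ht1.1, ht1.2])
  have hsa0 : 0 ≤ sa := Real.sqrt_nonneg _
  have hst0 : 0 ≤ st := Real.sqrt_nonneg _
  refine ⟨t • v + st • u, ?_, ?_, ?_⟩
  · have : ‖t • v + st • u‖ ^ 2 = 1 := by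
      rw [norm_add_sq_real, norm_smul, norm_smul, real_inner_smul_left, real_inner_smul_right,
        real_inner_comm u v, hu2]
      simp [Real.norm_eq_abs, mul_pow, sq_abs, hv, hu1]
      nlinarith [hst2]
    calc ‖t • v + st • u‖ = Real.sqrt (‖t • v + st • u‖ ^ 2) :=
          (Real.sqrt_sq (norm_nonneg _)).symm
    _ = Real.sqrt 1 := by rw [this]
    _ = 1 := Real.sqrt_one
  · rw [inner_add_left, real_inner_smul_left, real_inner_smul_left, hu2,
      real_inner_self_eq_norm_sq, hv]
    ring
  · -- key inequality via arccos
    have hkey : a * b + sa * Real.sqrt (1 - b ^ 2) ≤ a * t + sa * st := by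
      have hca : Real.cos (Real.arccos a) = a := Real.cos_arccos ha1.1 ha1.2
      have hct : Real.cos (Real.arccos t) = t := Real.cos_arccos ht1.1 ht1.2
      have hcb : Real.cos (Real.arccos b) = b := Real.cos_arccos hb1.1 hb1.2
      have hατ : Real.arccos a ≤ Real.arccos t := arccosAntitone htp
      have hτβ : Real.arccos t ≤ Real.arccos b := arccosAntitone hqt
      have h1 : Real.cos (Real.arccos b - Real.arccos a) ≤
          Real.cos (Real.arccos t - Real.arccos a) :=
        Real.cos_le_cos_of_nonneg_of_le_pi (by linarith)
          (by linarith [Real.arccos_le_pi b, Real.arccos_nonneg a]) (by linarith)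
      rw [Real.cos_sub, Real.cos_sub, hca, hct, hcb, Real.sin_arccos, Real.sin_arccos,
        Real.sin_arccos, ← hsa, ← hst] at h1
      nlinarith [h1]
    -- compare squared distances
    have hd1 : dist p (t • v + st • u) ^ 2 = 2 - 2 * (a * t + sa * st) := by
      rw [dist_eq_norm, hpu]
      have : a • v + sa • u - (t • v + st • u) = (a - t) • v + (sa - st) • u := by module
      rw [this, norm_add_sq_real, norm_smul, norm_smul, real_inner_smul_left,
        real_inner_smul_right, real_inner_comm u v, hu2]
      simp [Real.norm_eq_abs, mul_pow, sq_abs, hv, hu1]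
      nlinarith [hsa2, hst2]
    have hd2 : dist p q ^ 2 = 2 - 2 * ⟪p, q⟫ := by
      rw [dist_eq_norm, norm_sub_sq_real, hp, hq]
      ring
    have hipq : ⟪p, q⟫ ≤ a * b + sa * Real.sqrt (1 - b ^ 2) := by
      have hq' : ⟪u, q - b • v⟫ ≤ Real.sqrt (1 - b ^ 2) := by
        have hnq : ‖q - b • v‖ = Real.sqrt (1 - b ^ 2) := by
          have : ‖q - b • v‖ ^ 2 = 1 - b ^ 2 := by
            rw [norm_sub_sq_real, norm_smul, hq, real_inner_smul_right]
            simp only [Real.norm_eq_abs, hv, mul_one, one_pow]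
            nlinarith [sq_abs b]
          rw [← this, Real.sqrt_sq (norm_nonneg _)]
        calc ⟪u, q - b • v⟫ ≤ ‖u‖ * ‖q - b • v‖ := real_inner_le_norm _ _
        _ = Real.sqrt (1 - b ^ 2) := by rw [hu1, one_mul, hnq]
      have hexp : ⟪p, q⟫ = a * b + sa * ⟪u, q - b • v⟫ := by
        rw [hpu, inner_add_left, real_inner_smul_left, real_inner_smul_left,
          inner_sub_right, real_inner_smul_right, hu2,
          show (inner ℝ v q : ℝ) = b from by rw [real_inner_comm]]
        ring
      rw [hexp]
      linarith [mul_le_mul_of_nonneg_left hq' hsa0]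
    have h3 : dist p (t • v + st • u) ^ 2 ≤ dist p q ^ 2 := by
      rw [hd1, hd2]; linarith
    have h4 := Real.sqrt_le_sqrt h3
    rwa [Real.sqrt_sq dist_nonneg, Real.sqrt_sq dist_nonneg] at h4

theorem sumSqOne {n : ℕ} (x : EuclideanSpace ℝ (Fin n)) (hx : ‖x‖ = 1) :
    ∑ i, (x i) ^ 2 = 1 := by
  have h1 : Real.sqrt (∑ i, ‖x i‖ ^ 2) = 1 := by rw [← EuclideanSpace.norm_eq, hx]
  have h0 : (0:ℝ) ≤ ∑ i, ‖x i‖ ^ 2 := Finset.sum_nonneg fun i _ => sq_nonneg _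
  have h2 : (∑ i, ‖x i‖ ^ 2) = 1 := by nlinarith [Real.sq_sqrt h0]
  simpa [Real.norm_eq_abs, sq_abs] using h2

theorem powDiff (n : ℕ) (a b : ℝ) (hb : 0 ≤ b) (hba : b ≤ a) :
    a ^ n - b ^ n ≤ n * a ^ (n - 1) * (a - b) := by
  induction n with
  | zero => simp
  | succ m ih =>
    have ha : 0 ≤ a := hb.trans hba
    have h1 : a ^ (m + 1) - b ^ (m + 1) = a * (a ^ m - b ^ m) + b ^ m * (a - b) := by ring
    have h2 : b ^ m ≤ a ^ m := pow_le_pow_left₀ hb hba m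
    have h3 : a * (a ^ m - b ^ m) ≤ a * (m * a ^ (m - 1) * (a - b)) :=
      mul_le_mul_of_nonneg_left ih ha
    have h4 : a * (m * a ^ (m - 1) * (a - b)) ≤ m * a ^ m * (a - b) := by
      rcases Nat.eq_zero_or_pos m with hm | hm
      · subst hm; simp
      · have : a * a ^ (m - 1) = a ^ m := by
          rw [← pow_succ']
          congr 1
          omega
        rw [show a * (↑m * a ^ (m - 1) * (a - b)) = ↑m * (a * a ^ (m - 1)) * (a - b) from by ring,
          this]
    have h5 : b ^ m * (a - b) ≤ a ^ m * (a - b) :=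
      mul_le_mul_of_nonneg_right h2 (by linarith)
    push_cast
    calc a ^ (m + 1) - b ^ (m + 1) ≤ (m * a ^ m * (a-b)) + a ^ m * (a - b) := by
          rw [h1]; exact add_le_add (h3.trans h4) h5
    _ = (m + 1) * a ^ (m + 1 - 1) * (a - b) := by simp; ring

open scoped Classical in

open scoped Classical in
theorem greedyNet {ι X : Type*} [MetricSpace X] (y : ι → X) (δ : ℝ) (hδ : 0 ≤ δ) (F : Finset ι) :
    ∃ G ⊆ F, (∀ i ∈ G, ∀ j ∈ G, i ≠ j → δ < dist (y i) (y j)) ∧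
      ∀ i ∈ F, ∃ j ∈ G, dist (y i) (y j) ≤ δ := by
  induction F using Finset.strongInduction with
  | _ F ih =>
    rcases F.eq_empty_or_nonempty with rfl | ⟨i₀, hi₀⟩
    · exact ⟨∅, Finset.Subset.refl _, by simp, by simp⟩
    · set F' := F.filter (fun i => δ < dist (y i) (y i₀)) with hF'
      have hss : F' ⊂ F := by
        refine Finset.ssubset_iff_of_subset (Finset.filter_subset _ _) |>.2 ⟨i₀, hi₀, ?_⟩
        simp only [hF', Finset.mem_filter, dist_self, not_and, not_lt]
        exact fun _ => hδ
      obtain ⟨G', hG'sub, hsep, hcov⟩ := ih F' hss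
      refine ⟨insert i₀ G', ?_, ?_, ?_⟩
      · exact Finset.insert_subset hi₀ (hG'sub.trans (Finset.filter_subset _ _))
      · intro i hi j hj hij
        rcases Finset.mem_insert.1 hi with rfl | hiG
        · rcases Finset.mem_insert.1 hj with rfl | hjG
          · exact absurd rfl hij
          · have := (Finset.mem_filter.1 (hG'sub hjG)).2
            rwa [dist_comm]
        · rcases Finset.mem_insert.1 hj with rfl | hjG
          · exact (Finset.mem_filter.1 (hG'sub hiG)).2
          · exact hsep i hiG j hjG hij
      · intro i hi
        by_cases h : δ < dist (y i) (y i₀)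
        · obtain ⟨j, hj, hd⟩ := hcov i (Finset.mem_filter.2 ⟨hi, h⟩)
          exact ⟨j, Finset.mem_insert_of_mem hj, hd⟩
        · exact ⟨i₀, Finset.mem_insert_self _ _, le_of_not_gt h⟩

theorem packingBound {d : ℕ} (hd : 1 ≤ d) {ι : Type*} (G : Finset ι)
    (w : ι → EuclideanSpace ℝ (Fin d)) (ρ δ : ℝ) (hδ : 0 < δ) (hδ1 : δ ≤ 1)
    (hρ0 : 0 ≤ ρ) (hρ : ρ ≤ 1)
    (hw : ∀ i ∈ G, ‖w i‖ = ρ)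
    (hsep : ∀ i ∈ G, ∀ j ∈ G, i ≠ j → δ < dist (w i) (w j)) :
    (G.card : ℝ) * (δ / 2) ^ d ≤ d * 2 ^ (d - 1) * δ := by
  classical
  haveI : Nonempty (Fin d) := ⟨⟨0, hd⟩⟩
  obtain ⟨R, hR⟩ : ∃ R : ℝ, R = ρ + δ / 2 := ⟨_, rfl⟩
  obtain ⟨m, hm⟩ : ∃ m : ℝ, m = max (ρ - δ / 2) 0 := ⟨_, rfl⟩
  have hδ2 : (0:ℝ) < δ / 2 := by linarith
  have hRpos : 0 < R := by rw [hR]; linarith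
  have hm0 : 0 ≤ m := by rw [hm]; exact le_max_right _ _
  have hmlb : ρ - δ / 2 ≤ m := by rw [hm]; exact le_max_left _ _
  have hmR : m ≤ R := by rw [hm, hR]; apply max_le <;> linarith
  have hR2 : R ≤ 2 := by rw [hR]; linarith
  have hRm : R - m ≤ δ := by linarith
  -- the balls are disjoint and inside the annulus
  have hdisj : (G : Set ι).PairwiseDisjoint (fun i => ball (w i) (δ / 2)) := by
    intro i hi j hj hij
    exact ball_disjoint_ball (by linarith [hsep i hi j hj hij])
  have hsub : ∀ i ∈ G, ball (w i) (δ / 2) ⊆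
      closedBall (0 : EuclideanSpace ℝ (Fin d)) R \
        ball (0 : EuclideanSpace ℝ (Fin d)) (ρ - δ / 2) := by
    intro i hi x hx
    rw [mem_ball] at hx
    have h1 : ‖x‖ ≤ dist x (w i) + ρ := by
      rw [← hw i hi, dist_eq_norm]
      simpa using norm_add_le (x - w i) (w i)
    have h2 : ρ ≤ dist x (w i) + ‖x‖ := by
      rw [← hw i hi, dist_comm, dist_eq_norm]
      simpa using norm_add_le (w i - x) x
    constructor
    · rw [mem_closedBall, dist_zero_right, hR]; linarith
    · simp only [mem_ball, dist_zero_right, not_lt]; linarith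
  -- volumes
  set Vd : ℝ≥0∞ := ENNReal.ofReal (Real.sqrt Real.pi ^ d / Real.Gamma (d / 2 + 1)) with hVd
  have hVd0 : Vd ≠ 0 := by
    rw [hVd]
    simp only [ne_eq, ENNReal.ofReal_eq_zero, not_le]
    apply div_pos (pow_pos (Real.sqrt_pos.2 Real.pi_pos) d)
    apply Real.Gamma_pos_of_pos; positivity
  have hVdtop : Vd ≠ ⊤ := ENNReal.ofReal_ne_top
  have hballvol : ∀ x : EuclideanSpace ℝ (Fin d), ∀ r : ℝ,
      volume (ball x r) = ENNReal.ofReal r ^ d * Vd := by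
    intro x r
    rw [EuclideanSpace.volume_ball, Fintype.card_fin]
  have hcballvol : ∀ x : EuclideanSpace ℝ (Fin d), ∀ r : ℝ,
      volume (closedBall x r) = ENNReal.ofReal r ^ d * Vd := by
    intro x r
    rw [EuclideanSpace.volume_closedBall, Fintype.card_fin]
  have key : (G.card : ℝ≥0∞) * (ENNReal.ofReal (δ / 2) ^ d * Vd) ≤
      ENNReal.ofReal (R ^ d - m ^ d) * Vd := by
    calc (G.card : ℝ≥0∞) * (ENNReal.ofReal (δ / 2) ^ d * Vd)
        = ∑ i ∈ G, volume (ball (w i) (δ / 2)) := by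
          rw [Finset.sum_congr rfl (fun i _ => hballvol (w i) (δ / 2)), Finset.sum_const,
            nsmul_eq_mul]
    _ = volume (⋃ i ∈ G, ball (w i) (δ / 2)) := by
          rw [measure_biUnion_finset hdisj (fun i _ => measurableSet_ball)]
    _ ≤ volume (closedBall (0 : EuclideanSpace ℝ (Fin d)) R \
          ball (0 : EuclideanSpace ℝ (Fin d)) (ρ - δ / 2)) :=
          measure_mono (Set.iUnion₂_subset hsub)
    _ = ENNReal.ofReal R ^ d * Vd - ENNReal.ofReal (ρ - δ / 2) ^ d * Vd := by
          rw [measure_diff (ball_subset_closedBall.trans (closedBall_subset_closedBall (by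
              linarith))) measurableSet_ball.nullMeasurableSet
            (by rw [hballvol]; exact ENNReal.mul_ne_top (by simp) hVdtop),
            hballvol, hcballvol]
    _ = ENNReal.ofReal (R ^ d - m ^ d) * Vd := by
          have h1 : ENNReal.ofReal (ρ - δ / 2) = ENNReal.ofReal m := by
            rcases le_total (ρ - δ / 2) 0 with h | h
            · rw [ENNReal.ofReal_eq_zero.2 h, hm, max_eq_right h, ENNReal.ofReal_zero]
            · rw [hm, max_eq_left h]
          rw [h1, ← ENNReal.ofReal_pow hm0, ← ENNReal.ofReal_pow hRpos.le,
            ← ENNReal.sub_mul (fun _ _ => hVdtop),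
            ENNReal.ofReal_sub _ (pow_nonneg hm0 d)]
  rw [← mul_assoc, ENNReal.mul_le_mul_iff_left hVd0 hVdtop, ← ENNReal.ofReal_pow hδ2.le,
    ← ENNReal.ofReal_natCast, ← ENNReal.ofReal_mul (by positivity)] at key
  rw [ENNReal.ofReal_le_ofReal_iff
    (sub_nonneg.2 (pow_le_pow_left₀ hm0 hmR d))] at key
  have hpd : R ^ d - m ^ d ≤ d * 2 ^ (d - 1) * δ := by
    calc R ^ d - m ^ d ≤ d * R ^ (d - 1) * (R - m) := powDiff d R m hm0 hmR
    _ ≤ d * 2 ^ (d - 1) * δ := by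
        have h1 : R ^ (d-1) ≤ 2 ^ (d-1) := pow_le_pow_left₀ hRpos.le hR2 _
        have h2 : (0:ℝ) ≤ R - m := by linarith
        calc (d:ℝ) * R ^ (d-1) * (R-m) ≤ (d:ℝ) * 2 ^ (d-1) * (R-m) :=
              mul_le_mul_of_nonneg_right
                (mul_le_mul_of_nonneg_left h1 (Nat.cast_nonneg d)) h2
        _ ≤ (d:ℝ) * 2 ^ (d-1) * δ := mul_le_mul_of_nonneg_left hRm (by positivity)
  linarith

set_option maxHeartbeats 1000000 in
theorem capMeasureNorth {d : ℕ} (hd : 1 ≤ d) (r : ℝ) (hr0 : 0 < r) (hr : r ≤ 1 / 2) :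
    μH[(d : ℝ)] (closedBall (EuclideanSpace.single (Fin.last d) (1:ℝ)) r ∩
        sphere (0 : EuclideanSpace ℝ (Fin (d + 1))) 1)
      ≤ ENNReal.ofReal ((2 * Real.sqrt d) ^ d * (2 * r) ^ d) := by
  classical
  set e : EuclideanSpace ℝ (Fin (d + 1)) := EuclideanSpace.single (Fin.last d) (1:ℝ) with he
  set g : (Fin d → ℝ) → EuclideanSpace ℝ (Fin (d + 1)) :=
    fun w => WithLp.toLp 2 (Fin.snoc w (Real.sqrt (1 - ∑ j, (w j) ^ 2)) : Fin (d+1) → ℝ) with hg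
  set s : Set (Fin d → ℝ) := {w | (∀ j, |w j| ≤ r) ∧ ∑ j, (w j) ^ 2 ≤ 3 / 4} with hs
  -- coordinates vs distance in EuclideanSpace
  have hcoord : ∀ (x z : EuclideanSpace ℝ (Fin (d + 1))) (i : Fin (d + 1)),
      |x i - z i| ≤ dist x z := by
    intro x z i
    rw [EuclideanSpace.dist_eq]
    have h1 : dist (x i) (z i) ^ 2 ≤ ∑ j, dist (x j) (z j) ^ 2 :=
      Finset.single_le_sum (f := fun j => dist (x j) (z j) ^ 2)
        (fun j _ => sq_nonneg _) (Finset.mem_univ i)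
    calc |x i - z i| = Real.sqrt (dist (x i) (z i) ^ 2) := by
          rw [Real.sqrt_sq dist_nonneg, Real.dist_eq]
    _ ≤ _ := Real.sqrt_le_sqrt h1
  have hsum : ∀ x : EuclideanSpace ℝ (Fin (d + 1)), ‖x‖ = 1 → ∑ i, (x i) ^ 2 = 1 := by
    intro x hx
    have h1 : Real.sqrt (∑ i, ‖x i‖ ^ 2) = 1 := by rw [← EuclideanSpace.norm_eq, hx]
    have h2 : (∑ i, ‖x i‖ ^ 2) = 1 := by
      have h0 : (0:ℝ) ≤ ∑ i, ‖x i‖ ^ 2 := Finset.sum_nonneg fun i _ => sq_nonneg _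
      nlinarith [Real.sq_sqrt h0]
    simpa [Real.norm_eq_abs, sq_abs] using h2
  -- coverage
  have hcover : closedBall e r ∩ sphere (0 : EuclideanSpace ℝ (Fin (d + 1))) 1 ⊆ g '' s := by
    rintro x ⟨hx1, hx2⟩
    rw [mem_closedBall] at hx1
    rw [mem_sphere_zero_iff_norm] at hx2
    have hxsum := hsum x hx2
    have hlast : |x (Fin.last d) - 1| ≤ r := by
      have := hcoord x e (Fin.last d)
      rw [he, EuclideanSpace.single_apply, if_pos rfl] at this
      exact this.trans hx1
    have hlast2 : 1 / 2 ≤ x (Fin.last d) := by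
      rw [abs_le] at hlast; linarith
    set w : Fin d → ℝ := fun j => x j.castSucc with hw
    have hsplit : (∑ j, (w j) ^ 2) + x (Fin.last d) ^ 2 = 1 := by
      rw [← hxsum, Fin.sum_univ_castSucc]
    refine ⟨w, ⟨?_, ?_⟩, ?_⟩
    · intro j
      have := hcoord x e j.castSucc
      rw [he, EuclideanSpace.single_apply,
        if_neg (Fin.ne_last_of_lt (Fin.castSucc_lt_last j)), sub_zero] at this
      exact this.trans hx1
    · nlinarith
    · have hxl : Real.sqrt (1 - ∑ j, (w j) ^ 2) = x (Fin.last d) := by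
        rw [show (1 - ∑ j, (w j) ^ 2) = x (Fin.last d) ^ 2 by linarith,
          Real.sqrt_sq (by linarith)]
      ext i
      refine Fin.lastCases ?_ (fun j => ?_) i
      · simp only [hg, WithLp.ofLp_toLp, Fin.snoc_last]
        exact hxl
      · simp only [hg, WithLp.ofLp_toLp, Fin.snoc_castSucc, hw]
  -- Lipschitz bound
  have hlip : LipschitzOnWith (Real.toNNReal (2 * Real.sqrt d)) g s := by
    apply LipschitzOnWith.of_dist_le_mul
    intro w hw w' hw'
    rw [hs] at hw hw'
    obtain ⟨-, hw2⟩ := hw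
    obtain ⟨-, hw2'⟩ := hw'
    set S : ℝ := ∑ j, (w j - w' j) ^ 2 with hS
    have hS0 : 0 ≤ S := Finset.sum_nonneg fun j _ => sq_nonneg _
    -- each sq coordinate diff bounded by sup dist
    have hSd : S ≤ d * dist w w' ^ 2 := by
      have h1 : ∀ j, (w j - w' j) ^ 2 ≤ dist w w' ^ 2 := by
        intro j
        have h2 : dist (w j) (w' j) ≤ dist w w' := dist_le_pi_dist w w' j
        have h3 : (0:ℝ) ≤ dist (w j) (w' j) := dist_nonneg
        rw [Real.dist_eq] at h2
        calc (w j - w' j) ^ 2 = |w j - w' j| ^ 2 := (sq_abs _).symm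
        _ ≤ dist w w' ^ 2 := pow_le_pow_left₀ (abs_nonneg _) h2 2
      calc S ≤ ∑ _j : Fin d, dist w w' ^ 2 := Finset.sum_le_sum fun j _ => h1 j
      _ = d * dist w w' ^ 2 := by rw [Finset.sum_const, Finset.card_univ, Fintype.card_fin,
            nsmul_eq_mul]
    -- difference of q's
    have hq : (∑ j, (w j) ^ 2 - ∑ j, (w' j) ^ 2) ^ 2 ≤ 3 * S := by
      have h1 : (∑ j, (w j) ^ 2 - ∑ j, (w' j) ^ 2) = ∑ j, (w j - w' j) * (w j + w' j) := by
        rw [← Finset.sum_sub_distrib]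
        congr 1; funext j; ring
      have h2 := Finset.sum_mul_sq_le_sq_mul_sq Finset.univ (fun j => w j - w' j)
        (fun j => w j + w' j)
      have h3 : ∑ j, (w j + w' j) ^ 2 ≤ 3 := by
        have h4 : ∑ j, (w j + w' j) ^ 2 ≤ ∑ j, (2 * (w j)^2 + 2 * (w' j)^2) :=
          Finset.sum_le_sum fun j _ => by nlinarith [sq_nonneg (w j - w' j)]
        rw [Finset.sum_add_distrib, ← Finset.mul_sum, ← Finset.mul_sum] at h4
        linarith
      rw [h1]
      calc (∑ j, (w j - w' j) * (w j + w' j)) ^ 2 ≤ S * ∑ j, (w j + w' j) ^ 2 := h2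
      _ ≤ 3 * S := by nlinarith
    -- last coordinate difference
    have hlastdiff : (Real.sqrt (1 - ∑ j, (w j) ^ 2) - Real.sqrt (1 - ∑ j, (w' j) ^ 2)) ^ 2
        ≤ 3 * S := by
      set q := ∑ j, (w j) ^ 2
      set q' := ∑ j, (w' j) ^ 2
      have hq1 : Real.sqrt (1 - q) ^ 2 = 1 - q := Real.sq_sqrt (by linarith)
      have hq2 : Real.sqrt (1 - q') ^ 2 = 1 - q' := Real.sq_sqrt (by linarith)
      have hs1 : (1:ℝ)/2 ≤ Real.sqrt (1 - q) := by
        rw [show (1:ℝ)/2 = Real.sqrt (1/4) by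
          rw [show (1:ℝ)/4 = (1/2)^2 by norm_num, Real.sqrt_sq (by norm_num)]]
        exact Real.sqrt_le_sqrt (by linarith)
      have hs2 : (1:ℝ)/2 ≤ Real.sqrt (1 - q') := by
        rw [show (1:ℝ)/2 = Real.sqrt (1/4) by
          rw [show (1:ℝ)/4 = (1/2)^2 by norm_num, Real.sqrt_sq (by norm_num)]]
        exact Real.sqrt_le_sqrt (by linarith)
      have hAB : (Real.sqrt (1-q) - Real.sqrt (1-q')) * (Real.sqrt (1-q) + Real.sqrt (1-q'))
          = q' - q := by
        have h5 : Real.sqrt (1-q) ^ 2 - Real.sqrt (1-q') ^ 2 = q' - q := by linarith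
        linear_combination h5
      have h1 : ((Real.sqrt (1-q) - Real.sqrt (1-q')) *
          (Real.sqrt (1-q) + Real.sqrt (1-q'))) ^ 2 ≤ 3 * S := by
        rw [hAB, show (q' - q) ^ 2 = (q - q') ^ 2 from by ring]
        exact hq
      have h3 : 1 ≤ (Real.sqrt (1-q) + Real.sqrt (1-q')) ^ 2 := by nlinarith
      calc (Real.sqrt (1-q) - Real.sqrt (1-q')) ^ 2
          = (Real.sqrt (1-q) - Real.sqrt (1-q')) ^ 2 * 1 := by ring
      _ ≤ (Real.sqrt (1-q) - Real.sqrt (1-q')) ^ 2 *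
            (Real.sqrt (1-q) + Real.sqrt (1-q')) ^ 2 :=
          mul_le_mul_of_nonneg_left h3 (sq_nonneg _)
      _ = ((Real.sqrt (1-q) - Real.sqrt (1-q')) *
            (Real.sqrt (1-q) + Real.sqrt (1-q'))) ^ 2 := by ring
      _ ≤ 3 * S := h1
    -- assemble
    have hgdist : dist (g w) (g w') ^ 2 ≤ 4 * S := by
      rw [EuclideanSpace.dist_eq]
      rw [Real.sq_sqrt (Finset.sum_nonneg fun i _ => sq_nonneg _)]
      rw [Fin.sum_univ_castSucc]
      have hc : ∀ j : Fin d, dist (g w j.castSucc) (g w' j.castSucc) ^ 2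
          = (w j - w' j) ^ 2 := by
        intro j
        simp only [hg, WithLp.ofLp_toLp, Fin.snoc_castSucc, Real.dist_eq, sq_abs]
      have hl : dist (g w (Fin.last d)) (g w' (Fin.last d)) ^ 2 ≤ 3 * S := by
        simp only [hg, WithLp.ofLp_toLp, Fin.snoc_last, Real.dist_eq, sq_abs]
        exact hlastdiff
      calc (∑ j : Fin d, dist (g w j.castSucc) (g w' j.castSucc) ^ 2)
            + dist (g w (Fin.last d)) (g w' (Fin.last d)) ^ 2
          ≤ S + 3 * S := by
            apply add_le_add _ hl
            rw [Finset.sum_congr rfl (fun j _ => hc j)]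
      _ = 4 * S := by ring
    have h2d : (0:ℝ) ≤ 2 * Real.sqrt d := by positivity
    rw [Real.coe_toNNReal _ h2d]
    have hfin : dist (g w) (g w') ^ 2 ≤ (2 * Real.sqrt d * dist w w') ^ 2 := by
      have : (2 * Real.sqrt d * dist w w') ^ 2 = 4 * (d * dist w w' ^ 2) := by
        rw [mul_pow, mul_pow, Real.sq_sqrt (Nat.cast_nonneg d)]
        ring
      rw [this]
      calc dist (g w) (g w') ^ 2 ≤ 4 * S := hgdist
      _ ≤ 4 * (d * dist w w' ^ 2) := by linarith
    nlinarith [dist_nonneg (x := g w) (y := g w'), dist_nonneg (x := w) (y := w'),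
      mul_nonneg h2d (dist_nonneg (x := w) (y := w'))]
  -- volume of the parameter set
  have hvol : μH[(d : ℝ)] s ≤ ENNReal.ofReal ((2 * r) ^ d) := by
    have hμ : (μH[(d : ℝ)] : Measure (Fin d → ℝ)) = volume := by
      have := hausdorffMeasure_pi_real (ι := Fin d)
      rwa [Fintype.card_fin] at this
    rw [hμ]
    have hsub : s ⊆ closedBall (0 : Fin d → ℝ) r := by
      intro w hw
      rw [mem_closedBall, dist_pi_le_iff hr0.le]
      intro j
      rw [Real.dist_eq, Pi.zero_apply, sub_zero]
      exact hw.1 j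
    calc volume s ≤ volume (closedBall (0 : Fin d → ℝ) r) := measure_mono hsub
    _ = ENNReal.ofReal ((2 * r) ^ d) := by
        rw [Real.volume_pi_closedBall _ hr0.le, Fintype.card_fin]
  -- combine
  calc μH[(d : ℝ)] (closedBall e r ∩ sphere (0 : EuclideanSpace ℝ (Fin (d + 1))) 1)
      ≤ μH[(d : ℝ)] (g '' s) := measure_mono hcover
  _ ≤ (Real.toNNReal (2 * Real.sqrt d) : ℝ≥0∞) ^ (d:ℝ) * μH[(d : ℝ)] s :=
      hlip.hausdorffMeasure_image_le (by positivity)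
  _ ≤ ENNReal.ofReal ((2 * Real.sqrt d) ^ d * (2 * r) ^ d) := by
      rw [ENNReal.ofReal_mul (by positivity)]
      apply mul_le_mul' _ hvol
      rw [ENNReal.rpow_natCast]
      rw [← ENNReal.coe_pow]
      rw [← Real.toNNReal_pow (by positivity)]
      exact le_of_eq rfl

theorem capMeasure {d : ℕ} (hd : 1 ≤ d) (y : EuclideanSpace ℝ (Fin (d + 1))) (hy : ‖y‖ = 1)
    (r : ℝ) (hr0 : 0 < r) (hr : r ≤ 1 / 2) :
    μH[(d : ℝ)] (closedBall y r ∩ sphere (0 : EuclideanSpace ℝ (Fin (d + 1))) 1)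
      ≤ ENNReal.ofReal ((2 * Real.sqrt d) ^ d * (2 * r) ^ d) := by
  set e : EuclideanSpace ℝ (Fin (d + 1)) := EuclideanSpace.single (Fin.last d) (1:ℝ) with he
  have hne : ‖e‖ = 1 := by rw [he, EuclideanSpace.norm_single, norm_one]
  set O := Submodule.reflection (ℝ ∙ (e - y))ᗮ with hO
  have hOe : O e = y := Submodule.reflection_sub (by rw [hne, hy])
  have himg : (O : EuclideanSpace ℝ (Fin (d + 1)) → EuclideanSpace ℝ (Fin (d + 1))) ''
      (closedBall e r ∩ sphere (0 : EuclideanSpace ℝ (Fin (d + 1))) 1)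
      = closedBall y r ∩ sphere (0 : EuclideanSpace ℝ (Fin (d + 1))) 1 := by
    ext x
    constructor
    · rintro ⟨z, ⟨hz1, hz2⟩, rfl⟩
      rw [mem_closedBall] at hz1
      rw [mem_sphere_zero_iff_norm] at hz2
      constructor
      · rw [mem_closedBall, ← hOe]
        calc dist (O z) (O e) = dist z e := O.isometry.dist_eq z e
        _ ≤ r := hz1
      · rw [mem_sphere_zero_iff_norm, O.norm_map, hz2]
    · rintro ⟨hx1, hx2⟩
      rw [mem_closedBall] at hx1
      rw [mem_sphere_zero_iff_norm] at hx2
      refine ⟨O.symm x, ⟨?_, ?_⟩, O.apply_symm_apply x⟩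
      · rw [mem_closedBall]
        calc dist (O.symm x) e = dist (O (O.symm x)) (O e) := (O.isometry.dist_eq _ _).symm
        _ = dist x y := by rw [O.apply_symm_apply, hOe]
        _ ≤ r := hx1
      · rw [mem_sphere_zero_iff_norm, O.symm.norm_map, hx2]
  calc μH[(d : ℝ)] (closedBall y r ∩ sphere (0 : EuclideanSpace ℝ (Fin (d + 1))) 1)
      = μH[(d : ℝ)] ((O : EuclideanSpace ℝ (Fin (d + 1)) → EuclideanSpace ℝ (Fin (d + 1))) ''
        (closedBall e r ∩ sphere (0 : EuclideanSpace ℝ (Fin (d + 1))) 1)) := by rw [himg]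
  _ = μH[(d : ℝ)] (closedBall e r ∩ sphere (0 : EuclideanSpace ℝ (Fin (d + 1))) 1) :=
      O.isometry.hausdorffMeasure_image (Or.inl (by positivity)) _
  _ ≤ ENNReal.ofReal ((2 * Real.sqrt d) ^ d * (2 * r) ^ d) := capMeasureNorth hd r hr0 hr




set_option maxHeartbeats 2000000 in
/-- Only `O(N^{(d-1)/d})` regions of a diameter-bounded equal-area partition of `S^d` can meet
both a spherical cap and its complement in the sphere. -/
theorem card_regions_meeting_cap_boundary_le
    (d : ℕ) (hd : 1 ≤ d) (c : ℝ) (hc : 0 < c) :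
    ∃ K : ℝ, 0 < K ∧ ∀ N : ℕ, 0 < N →
      ∀ R : Fin N → Set (EuclideanSpace ℝ (Fin (d + 1))),
        (∀ i, MeasurableSet (R i)) →
        Pairwise (Function.onFun Disjoint R) →
        (⋃ i, R i) = sphere (0 : EuclideanSpace ℝ (Fin (d + 1))) 1 →
        (∀ i, sphereMeasure d (R i) = 1 / (N : ℝ≥0∞)) →
        (∀ i, Metric.diam (R i) ≤ c * (N : ℝ) ^ (-(1 : ℝ) / d)) →
        ∀ (v : EuclideanSpace ℝ (Fin (d + 1))) (t : ℝ), ‖v‖ = 1 →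
          ((Finset.univ.filter fun i : Fin N =>
              (R i ∩ sphericalCap d v t).Nonempty ∧
              (R i ∩ (sphere (0 : EuclideanSpace ℝ (Fin (d + 1))) 1 \
                sphericalCap d v t)).Nonempty).card : ℝ)
            ≤ K * (N : ℝ) ^ (((d : ℝ) - 1) / d) := by
  have hdR : (0:ℝ) < d := by exact_mod_cast hd
  set Sd : Set (EuclideanSpace ℝ (Fin (d + 1))) :=
    sphere (0 : EuclideanSpace ℝ (Fin (d + 1))) 1 with hSd
  set Hm : ℝ≥0∞ := μH[(d : ℝ)] Sd with hHm
  by_cases hH : Hm = 0 ∨ Hm = ⊤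
  · -- degenerate case: hypotheses are contradictory
    refine ⟨1, one_pos, ?_⟩
    intro N hN R hmeas hdisjP huniv hmeasσ hdiam v t hv
    exfalso
    have hi := hmeasσ ⟨0, hN⟩
    rw [sphereMeasure, Measure.smul_apply, Measure.restrict_apply (hmeas _), smul_eq_mul] at hi
    rw [← hSd, ← hHm] at hi
    have hN0 : ((N:ℝ≥0∞))⁻¹ ≠ 0 := by
      simp [ENNReal.inv_ne_zero]
    rcases hH with h0 | htop
    · have hz : μH[(d:ℝ)] (R ⟨0, hN⟩ ∩ Sd) = 0 :=
        le_antisymm ((measure_mono Set.inter_subset_right).trans (le_of_eq h0)) (zero_le)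
      rw [hz, mul_zero] at hi
      rw [one_div] at hi
      exact hN0 hi.symm
    · rw [htop, ENNReal.inv_top, zero_mul] at hi
      rw [one_div] at hi
      exact hN0 hi.symm
  · push_neg at hH
    obtain ⟨hH0, hHtop⟩ := hH
    set Bc : ℝ≥0∞ := Hm⁻¹ * ENNReal.ofReal ((2 * Real.sqrt d) ^ d * (20 * c) ^ d) with hBc
    have hBctop : Bc ≠ ⊤ :=
      ENNReal.mul_ne_top (ENNReal.inv_ne_top.2 hH0) ENNReal.ofReal_ne_top
    set Breal : ℝ := Bc.toReal with hBreal
    have hBreal0 : 0 ≤ Breal := ENNReal.toReal_nonneg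
    set Kmain : ℝ := Breal * (d * 2 ^ (d - 1) * 8 * c / (4 ^ d * c ^ d)) with hKmain
    refine ⟨max (20 * c) Kmain + 1, by positivity, ?_⟩
    intro N hN R hmeas hdisjP huniv hmeasσ hdiam v t hv
    set K : ℝ := max (20 * c) Kmain + 1 with hK
    have hNpos : (0:ℝ) < N := by exact_mod_cast hN
    set ε : ℝ := c * (N : ℝ) ^ (-(1 : ℝ) / d) with hε
    have hε0 : 0 < ε := by
      rw [hε]; positivity
    have hεd : ((N:ℝ) ^ (-(1 : ℝ) / d)) ^ (d:ℕ) = (N:ℝ)⁻¹ := by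
      rw [← Real.rpow_natCast ((N:ℝ) ^ (-(1 : ℝ) / d)) d, ← Real.rpow_mul hNpos.le]
      rw [show (-(1:ℝ)/d) * d = -1 by field_simp]
      exact Real.rpow_neg_one _
    have hrhs0 : (0:ℝ) ≤ (N : ℝ) ^ (((d : ℝ) - 1) / d) := Real.rpow_nonneg hNpos.le _
    set F : Finset (Fin N) := Finset.univ.filter (fun i : Fin N =>
        (R i ∩ sphericalCap d v t).Nonempty ∧
        (R i ∩ (sphere (0 : EuclideanSpace ℝ (Fin (d + 1))) 1 \
          sphericalCap d v t)).Nonempty) with hF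
    show (F.card : ℝ) ≤ K * (N : ℝ) ^ (((d : ℝ) - 1) / d)
    by_cases hsmall : (N:ℝ) < (20 * c) ^ (d:ℕ)
    · -- small N : trivial bound
      have h1 : (F.card : ℝ) ≤ N := by
        have := Finset.card_filter_le Finset.univ (fun i : Fin N =>
          (R i ∩ sphericalCap d v t).Nonempty ∧
          (R i ∩ (sphere (0 : EuclideanSpace ℝ (Fin (d + 1))) 1 \
            sphericalCap d v t)).Nonempty)
        rw [Finset.card_univ, Fintype.card_fin] at this
        exact_mod_cast this
      have h2 : (N:ℝ) = (N:ℝ) ^ ((1:ℝ)/d) * (N:ℝ) ^ (((d:ℝ)-1)/d) := by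
        rw [← Real.rpow_add hNpos, show (1:ℝ)/d + ((d:ℝ)-1)/d = 1 by field_simp; ring,
          Real.rpow_one]
      have h3 : (N:ℝ) ^ ((1:ℝ)/d) ≤ 20 * c := by
        calc (N:ℝ) ^ ((1:ℝ)/d) ≤ (((20*c) ^ (d:ℕ) : ℝ)) ^ ((1:ℝ)/d) :=
              Real.rpow_le_rpow hNpos.le hsmall.le (by positivity)
        _ = 20 * c := by
            rw [← Real.rpow_natCast (20*c) d, ← Real.rpow_mul (by positivity)]
            rw [show (d:ℝ) * ((1:ℝ)/d) = 1 by field_simp]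
            exact Real.rpow_one _
      calc (F.card : ℝ) ≤ N := h1
      _ = (N:ℝ) ^ ((1:ℝ)/d) * (N:ℝ) ^ (((d:ℝ)-1)/d) := h2
      _ ≤ (20 * c) * (N:ℝ) ^ (((d:ℝ)-1)/d) := mul_le_mul_of_nonneg_right h3 hrhs0
      _ ≤ K * (N:ℝ) ^ (((d:ℝ)-1)/d) := by
          apply mul_le_mul_of_nonneg_right _ hrhs0
          rw [hK]
          have := le_max_left (20*c) Kmain
          linarith
    · push_neg at hsmall
      have hε20 : ε ≤ 1/20 := by
        have h4 : (N:ℝ) ^ (-(1:ℝ)/d) ≤ (((20*c) ^ (d:ℕ) : ℝ)) ^ (-(1:ℝ)/d) := by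
          apply Real.rpow_le_rpow_of_nonpos (by positivity) hsmall
          apply div_nonpos_of_nonpos_of_nonneg <;> simp [hdR.le]
        have h5 : (((20*c) ^ (d:ℕ) : ℝ)) ^ (-(1:ℝ)/d) = (20*c)⁻¹ := by
          rw [← Real.rpow_natCast (20*c) d, ← Real.rpow_mul (by positivity)]
          rw [show (d:ℝ) * (-(1:ℝ)/d) = -1 by field_simp]
          exact Real.rpow_neg_one _
        rw [hε]
        calc c * (N:ℝ) ^ (-(1:ℝ)/d) ≤ c * (20*c)⁻¹ := by
              apply mul_le_mul_of_nonneg_left _ hc.le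
              rw [← h5]; exact h4
        _ = 1/20 := by field_simp
      by_cases hFempty : F = ∅
      · rw [hFempty]
        simp only [Finset.card_empty, Nat.cast_zero]
        positivity
      · obtain ⟨i₀, hi₀⟩ := Finset.nonempty_of_ne_empty hFempty
        have hRS : ∀ i, R i ⊆ Sd := fun i => huniv ▸ Set.subset_iUnion R i
        have hRb : ∀ i : Fin N, Bornology.IsBounded (R i) := fun i =>
          (isBounded_closedBall (x := (0 : EuclideanSpace ℝ (Fin (d+1)))) (r := 1)).subset
            ((hRS i).trans (by rw [hSd]; exact sphere_subset_closedBall))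
        have hbd : ∀ i ∈ F, ∃ y, ‖y‖ = 1 ∧ ⟪y, v⟫ = t ∧ R i ⊆ closedBall y (2*ε) := by
          intro i hi
          rw [hF, Finset.mem_filter] at hi
          obtain ⟨-, ⟨p, hpR, hpS, hpt⟩, ⟨q, hqR, hqS, hqnot⟩⟩ := hi
          have hp1 : ‖p‖ = 1 := mem_sphere_zero_iff_norm.1 hpS
          have hq1 : ‖q‖ = 1 := mem_sphere_zero_iff_norm.1 hqS
          have hqt : ⟪q, v⟫ ≤ t := by
            by_contra h
            push_neg at h
            exact hqnot ⟨hqS, h.le⟩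
          have hdpq : dist p q ≤ ε := (dist_le_diam_of_mem (hRb i) hpR hqR).trans (hdiam i)
          obtain ⟨y, hy1, hy2, hy3⟩ := boundaryPoint hd v p q hv hp1 hq1 t hpt hqt
          refine ⟨y, hy1, hy2, fun z hz => ?_⟩
          rw [mem_closedBall]
          calc dist z y ≤ dist z p + dist p y := dist_triangle z p y
          _ ≤ ε + ε := add_le_add ((dist_le_diam_of_mem (hRb i) hz hpR).trans (hdiam i))
                (hy3.trans hdpq)
          _ = 2*ε := by ring
        obtain ⟨y₀, hy₀1, hy₀2, -⟩ := hbd i₀ hi₀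
        have hbd' : ∀ i : Fin N, ∃ y, ‖y‖ = 1 ∧ ⟪y, v⟫ = t ∧
            (i ∈ F → R i ⊆ closedBall y (2*ε)) := by
          intro i
          by_cases h : i ∈ F
          · obtain ⟨y, h1, h2, h3⟩ := hbd i h
            exact ⟨y, h1, h2, fun _ => h3⟩
          · exact ⟨y₀, hy₀1, hy₀2, fun hi => absurd hi h⟩
        choose Y hY1 hY2 hY3 using hbd'
        obtain ⟨G, hGF, hGsep, hGcov⟩ := greedyNet Y (8*ε) (by positivity) F
        -- per-ball bound
        have hperball : ∀ j, ((F.filter (fun i => dist (Y i) (Y j) ≤ 8*ε)).card : ℝ) ≤ Breal := by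
          intro j
          set Fj := F.filter (fun i => dist (Y i) (Y j) ≤ 8*ε) with hFj
          have hsubB : ∀ i ∈ Fj, R i ⊆ closedBall (Y j) (10*ε) := by
            intro i hij z hz
            rw [hFj, Finset.mem_filter] at hij
            have hzY : dist z (Y i) ≤ 2*ε := mem_closedBall.1 (hY3 i hij.1 hz)
            rw [mem_closedBall]
            calc dist z (Y j) ≤ dist z (Y i) + dist (Y i) (Y j) := dist_triangle _ _ _
            _ ≤ 2*ε + 8*ε := add_le_add hzY hij.2
            _ = 10*ε := by ring
          have hdisj2 : (↑Fj : Set (Fin N)).PairwiseDisjoint R := fun a _ b _ hab => hdisjP hab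
          have hcount : (Fj.card : ℝ≥0∞) * (N:ℝ≥0∞)⁻¹ ≤
              Hm⁻¹ * ENNReal.ofReal ((2*Real.sqrt d)^d * (2*(10*ε))^d) := by
            have h1 : ∑ i ∈ Fj, sphereMeasure d (R i) = sphereMeasure d (⋃ i ∈ Fj, R i) :=
              (measure_biUnion_finset hdisj2 (fun i _ => hmeas i)).symm
            have h2 : ∑ i ∈ Fj, sphereMeasure d (R i) = (Fj.card : ℝ≥0∞) * (N:ℝ≥0∞)⁻¹ := by
              rw [Finset.sum_congr rfl (fun i _ => hmeasσ i), Finset.sum_const, nsmul_eq_mul,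
                one_div]
            have h3 : sphereMeasure d (⋃ i ∈ Fj, R i) ≤
                sphereMeasure d (closedBall (Y j) (10*ε)) :=
              measure_mono (Set.iUnion₂_subset hsubB)
            have h4 : sphereMeasure d (closedBall (Y j) (10*ε)) ≤
                Hm⁻¹ * ENNReal.ofReal ((2*Real.sqrt d)^d * (2*(10*ε))^d) := by
              rw [sphereMeasure, Measure.smul_apply,
                Measure.restrict_apply measurableSet_closedBall, smul_eq_mul, ← hSd, ← hHm]
              exact mul_le_mul_right
                (capMeasure hd (Y j) (hY1 j) (10*ε) (by positivity) (by linarith)) _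
            calc (Fj.card : ℝ≥0∞) * (N:ℝ≥0∞)⁻¹ = ∑ i ∈ Fj, sphereMeasure d (R i) := h2.symm
            _ = sphereMeasure d (⋃ i ∈ Fj, R i) := h1
            _ ≤ sphereMeasure d (closedBall (Y j) (10*ε)) := h3
            _ ≤ _ := h4
          have hNne : (N:ℝ≥0∞) ≠ 0 := Nat.cast_ne_zero.2 hN.ne'
          have hNtop : (N:ℝ≥0∞) ≠ ⊤ := ENNReal.natCast_ne_top N
          have he2 : ENNReal.ofReal ((2*Real.sqrt d)^d * (2*(10*ε))^d) =
              ENNReal.ofReal ((2*Real.sqrt d)^d * (20*c)^d) * ((N:ℝ≥0∞))⁻¹ := by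
            have he1 : (2*(10*ε))^(d:ℕ) = (20*c)^(d:ℕ) * (N:ℝ)⁻¹ := by
              rw [hε, show 2*(10*(c * (N:ℝ) ^ (-(1:ℝ)/d))) =
                (20*c) * ((N:ℝ) ^ (-(1:ℝ)/d)) by ring, mul_pow, hεd]
            rw [he1, ← mul_assoc, ENNReal.ofReal_mul (by positivity),
              ENNReal.ofReal_inv_of_pos hNpos, ENNReal.ofReal_natCast]
          have hc2 : (Fj.card : ℝ≥0∞) ≤ Bc := by
            have hthis := mul_le_mul_left hcount (N:ℝ≥0∞)
            rw [mul_assoc, ENNReal.inv_mul_cancel hNne hNtop, mul_one, he2] at hthis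
            rw [mul_assoc, mul_assoc, ENNReal.inv_mul_cancel hNne hNtop, mul_one] at hthis
            rw [hBc]
            exact hthis
          have := ENNReal.toReal_mono hBctop hc2
          rw [ENNReal.toReal_natCast] at this
          exact this
        -- global count
        have hFsub : F ⊆ G.biUnion (fun j => F.filter (fun i => dist (Y i) (Y j) ≤ 8*ε)) := by
          intro i hi
          obtain ⟨j, hjG, hj⟩ := hGcov i hi
          exact Finset.mem_biUnion.2 ⟨j, hjG, Finset.mem_filter.2 ⟨hi, hj⟩⟩
        have hcardF : (F.card : ℝ) ≤ (G.card : ℝ) * Breal := by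
          have h1 : F.card ≤ ∑ j ∈ G, (F.filter (fun i => dist (Y i) (Y j) ≤ 8*ε)).card :=
            (Finset.card_le_card hFsub).trans Finset.card_biUnion_le
          have h2 : ((∑ j ∈ G, (F.filter (fun i => dist (Y i) (Y j) ≤ 8*ε)).card : ℕ) : ℝ)
              ≤ (G.card : ℝ) * Breal := by
            push_cast
            calc ∑ j ∈ G, (((F.filter (fun i => dist (Y i) (Y j) ≤ 8*ε)).card : ℕ) : ℝ)
                ≤ ∑ _j ∈ G, Breal := Finset.sum_le_sum (fun j _ => hperball j)
            _ = G.card * Breal := by rw [Finset.sum_const, nsmul_eq_mul]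
          exact (by exact_mod_cast h1 : (F.card:ℝ) ≤ _).trans h2
        -- packing bound on G
        set e : EuclideanSpace ℝ (Fin (d + 1)) := EuclideanSpace.single (Fin.last d) (1:ℝ)
          with he'
        have hnee : ‖e‖ = 1 := by rw [he', EuclideanSpace.norm_single, norm_one]
        set O := Submodule.reflection (ℝ ∙ (v - e))ᗮ with hOdef
        have hOv : O v = e := Submodule.reflection_sub (by rw [hv, hnee])
        set z : Fin N → EuclideanSpace ℝ (Fin (d+1)) := fun i => O (Y i) with hzdef
        have hzlast : ∀ i, z i (Fin.last d) = t := by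
          intro i
          have h1 : ⟪z i, e⟫ = t := by
            rw [hzdef, ← hOv]
            show ⟪O (Y i), O v⟫ = t
            rw [O.inner_map_map]
            exact hY2 i
          rw [he'] at h1
          simpa [EuclideanSpace.inner_single_right] using h1
        have hznorm : ∀ i, ‖z i‖ = 1 := fun i => by
          rw [hzdef]
          show ‖O (Y i)‖ = 1
          rw [O.norm_map]; exact hY1 i
        set w : Fin N → EuclideanSpace ℝ (Fin d) := fun i => WithLp.toLp 2 (fun k : Fin d => z i k.castSucc) with hwdef
        set ρ : ℝ := Real.sqrt (1 - t^2) with hρdef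
        have hwnorm : ∀ i, ‖w i‖ = ρ := by
          intro i
          have h1 : ∑ m, (z i m)^2 = 1 := sumSqOne (z i) (hznorm i)
          rw [Fin.sum_univ_castSucc, hzlast i] at h1
          rw [EuclideanSpace.norm_eq, hρdef]
          congr 1
          have h2 : ∀ k : Fin d, ‖w i k‖^2 = (z i k.castSucc)^2 := fun k => by
            rw [hwdef]
            simp [Real.norm_eq_abs, sq_abs]
          rw [Finset.sum_congr rfl (fun k _ => h2 k)]
          linarith
        have hwdist : ∀ i j, dist (w i) (w j) = dist (Y i) (Y j) := by
          intro i j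
          have h1 : dist (z i) (z j) = dist (Y i) (Y j) := by
            rw [hzdef]
            exact O.isometry.dist_eq _ _
          rw [← h1, EuclideanSpace.dist_eq, EuclideanSpace.dist_eq]
          congr 1
          rw [Fin.sum_univ_castSucc, hzlast i, hzlast j]
          simp [hwdef]
        have hGsep' : ∀ i ∈ G, ∀ j ∈ G, i ≠ j → 8*ε < dist (w i) (w j) := by
          intro i hi j hj hij
          rw [hwdist]
          exact hGsep i hi j hj hij
        have hρ1 : ρ ≤ 1 := by
          rw [hρdef]
          calc Real.sqrt (1 - t^2) ≤ Real.sqrt 1 := Real.sqrt_le_sqrt (by nlinarith [sq_nonneg t])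
          _ = 1 := Real.sqrt_one
        have hGcard := packingBound hd G w ρ (8*ε) (by positivity) (by linarith)
          (Real.sqrt_nonneg _) hρ1 (fun i _ => hwnorm i) hGsep'
        rw [show (8*ε)/2 = 4*ε by ring] at hGcard
        have hGle : (G.card : ℝ) ≤ (d * 2^(d-1) * (8*ε)) / (4*ε)^d :=
          (le_div_iff₀ (by positivity)).2 hGcard
        -- final algebra
        have hNX : (N:ℝ) ^ (((d:ℝ)-1)/d) = (N:ℝ) * (N:ℝ) ^ (-(1:ℝ)/d) := by
          rw [show ((d:ℝ)-1)/d = 1 + (-(1:ℝ)/d) by field_simp; ring]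
          rw [Real.rpow_add hNpos, Real.rpow_one]
        have h4ε : (4*ε)^(d:ℕ) = 4^(d:ℕ) * c^(d:ℕ) * (N:ℝ)⁻¹ := by
          rw [show 4*ε = (4*c) * ((N:ℝ) ^ (-(1:ℝ)/d)) by rw [hε]; ring, mul_pow, hεd, mul_pow]
        calc (F.card : ℝ) ≤ (G.card : ℝ) * Breal := hcardF
        _ ≤ ((d * 2^(d-1) * (8*ε)) / (4*ε)^d) * Breal :=
            mul_le_mul_of_nonneg_right hGle hBreal0
        _ = Kmain * (N:ℝ) ^ (((d:ℝ)-1)/d) := by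
            rw [hKmain, hNX, h4ε, hε]
            field_simp
        _ ≤ K * (N:ℝ) ^ (((d:ℝ)-1)/d) := by
            apply mul_le_mul_of_nonneg_right _ hrhs0
            rw [hK]
            linarith [le_max_right (20*c) Kmain]
end

section
/- For every integer d ≥ 1 there exists a constant C_d > 0 such that for every positive integer N there exists a finite set X ⊂ S^d with card X = N whose covering radius is at most C_d · N^{-1/d}; that is, every point of S^d lies within Euclidean distance C_d · N^{-1/d} of some point of X. -/
open Metric Real

noncomputable def sphMap (d : ℕ) (u : EuclideanSpace ℝ (Fin d)) : EuclideanSpace ℝ (Fin (d+1)) :=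
  WithLp.toLp 2 (Fin.cons (Real.cos ‖u‖) (fun j => (Real.sin ‖u‖ / ‖u‖) * u j))


lemma sphMap_sumsq (d : ℕ) (u : EuclideanSpace ℝ (Fin d)) :
    ∑ j : Fin d, ‖u j‖ ^ 2 = ‖u‖ ^ 2 := by
  rw [EuclideanSpace.norm_eq, Real.sq_sqrt]
  positivity

lemma sphMap_norm (d : ℕ) (u : EuclideanSpace ℝ (Fin d)) : ‖sphMap d u‖ = 1 := by
  have h : ∑ i : Fin (d+1), ‖sphMap d u i‖ ^ 2 = 1 := by
    rw [Fin.sum_univ_succ]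
    have h0 : sphMap d u 0 = Real.cos ‖u‖ := rfl
    have hs : ∀ j : Fin d, sphMap d u j.succ = (Real.sin ‖u‖ / ‖u‖) * u j := fun j => rfl
    simp only [h0, hs, norm_mul, mul_pow]
    rw [← Finset.mul_sum, sphMap_sumsq]
    rcases eq_or_ne u 0 with rfl | hu
    · simp
    · have hnu : ‖u‖ ≠ 0 := norm_ne_zero_iff.mpr hu
      have : ‖Real.sin ‖u‖ / ‖u‖‖ ^ 2 * ‖u‖ ^ 2 = Real.sin ‖u‖ ^ 2 := by
        rw [norm_div, div_pow, Real.norm_eq_abs, Real.norm_eq_abs, sq_abs, sq_abs]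
        field_simp
      rw [this, Real.norm_eq_abs, sq_abs, Real.cos_sq_add_sin_sq]
  rw [EuclideanSpace.norm_eq, h, Real.sqrt_one]
lemma mySinLip (a b : ℝ) : |Real.sin a - Real.sin b| ≤ |a - b| := by
  rw [Real.sin_sub_sin]
  have h1 := Real.abs_sin_le_abs (x := (a - b)/2)
  have h2 := Real.abs_cos_le_one ((a + b)/2)
  rw [abs_mul, abs_mul, abs_two]
  calc 2 * |Real.sin ((a-b)/2)| * |Real.cos ((a+b)/2)| ≤ 2 * |(a-b)/2| * 1 := by
        apply mul_le_mul (by nlinarith [abs_nonneg (Real.sin ((a-b)/2))]) h2 (abs_nonneg _) (by positivity)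
      _ = |a - b| := by rw [abs_div, abs_two]; ring
lemma myCosLip (a b : ℝ) : |Real.cos a - Real.cos b| ≤ |a - b| := by
  rw [Real.cos_sub_cos]
  have h1 := Real.abs_sin_le_abs (x := (a - b)/2)
  have h2 := Real.abs_sin_le_one ((a + b)/2)
  rw [abs_mul, abs_mul]
  have h20 : |(-2:ℝ)| = 2 := by norm_num
  rw [h20]
  calc 2 * |Real.sin ((a+b)/2)| * |Real.sin ((a-b)/2)| ≤ 2 * 1 * |(a-b)/2| := by
        apply mul_le_mul (by nlinarith [abs_nonneg (Real.sin ((a+b)/2))]) h1 (abs_nonneg _) (by positivity)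
      _ = |a - b| := by rw [abs_div, abs_two]; ring

lemma sinDivSmulSub (d : ℕ) (u v : EuclideanSpace ℝ (Fin d)) :
    ‖(Real.sin ‖u‖ / ‖u‖) • u - (Real.sin ‖v‖ / ‖v‖) • v‖ ≤ 3 * ‖u - v‖ := by
  have key : ∀ w : EuclideanSpace ℝ (Fin d), ‖(Real.sin ‖w‖ / ‖w‖) • w‖ ≤ ‖w‖ := by
    intro w
    rcases eq_or_ne w 0 with rfl | hw
    · simp
    · have hnw : (0:ℝ) < ‖w‖ := norm_pos_iff.mpr hw
      rw [norm_smul, Real.norm_eq_abs, abs_div, abs_of_pos hnw, div_mul_eq_mul_div,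
        mul_div_assoc, div_self hnw.ne', mul_one]
      calc |Real.sin ‖w‖| ≤ |‖w‖| := Real.abs_sin_le_abs
        _ = ‖w‖ := abs_of_pos hnw
  rcases eq_or_ne u 0 with rfl | hu
  · simpa using le_trans (key v) (by
      have : ‖v‖ = ‖(0:EuclideanSpace ℝ (Fin d)) - v‖ := by simp
      nlinarith [norm_nonneg v, this ▸ le_refl ‖v‖])
  rcases eq_or_ne v 0 with rfl | hv
  · simpa using le_trans (key u) (by nlinarith [norm_nonneg u])
  have ha : (0:ℝ) < ‖u‖ := norm_pos_iff.mpr hu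
  have hb : (0:ℝ) < ‖v‖ := norm_pos_iff.mpr hv
  set a := ‖u‖; set b := ‖v‖
  have split : (Real.sin a / a) • u - (Real.sin b / b) • v
      = (Real.sin a / a) • (u - v) + (Real.sin a / a - Real.sin b / b) • v := by
    rw [smul_sub, sub_smul]; abel
  rw [split]
  have h1 : ‖(Real.sin a / a) • (u - v)‖ ≤ ‖u - v‖ := by
    rw [norm_smul, Real.norm_eq_abs, abs_div, abs_of_pos ha]
    have : |Real.sin a| / a ≤ 1 := by
      rw [div_le_one ha]; calc |Real.sin a| ≤ |a| := Real.abs_sin_le_abs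
        _ = a := abs_of_pos ha
    nlinarith [norm_nonneg (u - v)]
  have h2 : ‖(Real.sin a / a - Real.sin b / b) • v‖ ≤ 2 * ‖u - v‖ := by
    rw [norm_smul, Real.norm_eq_abs]
    have hid : (Real.sin a / a - Real.sin b / b) * b
        = Real.sin a * ((b - a)/a) + (Real.sin a - Real.sin b) := by field_simp; ring
    have hab : |a - b| ≤ ‖u - v‖ := by
      simpa [a, b] using abs_norm_sub_norm_le u v
    have hterm1 : |Real.sin a * ((b-a)/a)| ≤ |a - b| := by
      rw [abs_mul, abs_div, abs_of_pos ha]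
      have h3 : |Real.sin a| ≤ a := le_of_le_of_eq Real.abs_sin_le_abs (abs_of_pos ha)
      have : |Real.sin a| * |b - a| ≤ a * |b - a| := by nlinarith [abs_nonneg (b - a)]
      calc |Real.sin a| * (|b-a|/a) = |Real.sin a| * |b-a| / a := by ring
        _ ≤ a * |b-a| / a := by gcongr
        _ = |b - a| := by field_simp
        _ = |a - b| := abs_sub_comm b a
    have hv2 : |Real.sin a / a - Real.sin b / b| * b ≤ 2 * |a - b| := by
      calc |Real.sin a / a - Real.sin b / b| * b = |(Real.sin a / a - Real.sin b / b) * b| := by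
            rw [abs_mul, abs_of_pos hb]
        _ = |Real.sin a * ((b - a)/a) + (Real.sin a - Real.sin b)| := by rw [hid]
        _ ≤ |Real.sin a * ((b-a)/a)| + |Real.sin a - Real.sin b| := abs_add_le _ _
        _ ≤ |a - b| + |a - b| := add_le_add hterm1 (mySinLip a b)
        _ = 2 * |a - b| := by ring
    calc |Real.sin a / a - Real.sin b / b| * ‖v‖ = |Real.sin a / a - Real.sin b / b| * b := rfl
      _ ≤ 2 * |a - b| := hv2
      _ ≤ 2 * ‖u - v‖ := by nlinarith
  calc ‖(Real.sin a / a) • (u - v) + (Real.sin a / a - Real.sin b / b) • v‖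
      ≤ ‖(Real.sin a / a) • (u - v)‖ + ‖(Real.sin a / a - Real.sin b / b) • v‖ := norm_add_le _ _
    _ ≤ ‖u - v‖ + 2 * ‖u - v‖ := add_le_add h1 h2
    _ = 3 * ‖u - v‖ := by ring


lemma sphMapLip (d : ℕ) (u v : EuclideanSpace ℝ (Fin d)) :
    dist (sphMap d u) (sphMap d v) ≤ 4 * dist u v := by
  set w : EuclideanSpace ℝ (Fin d) := (Real.sin ‖u‖ / ‖u‖) • u - (Real.sin ‖v‖ / ‖v‖) • v with hwdef
  have hwsum : ∑ j : Fin d, ‖w j‖ ^ 2 = ‖w‖ ^ 2 := by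
    rw [EuclideanSpace.norm_eq, Real.sq_sqrt]; positivity
  have hsum : ∑ i : Fin (d+1), dist (sphMap d u i) (sphMap d v i) ^ 2
      = (Real.cos ‖u‖ - Real.cos ‖v‖)^2 + ‖w‖^2 := by
    rw [Fin.sum_univ_succ]
    have g1 : dist (sphMap d u 0) (sphMap d v 0) ^ 2 = (Real.cos ‖u‖ - Real.cos ‖v‖)^2 := by
      rw [Real.dist_eq, sq_abs]
      have e1 : sphMap d u 0 = Real.cos ‖u‖ := rfl
      have e2 : sphMap d v 0 = Real.cos ‖v‖ := rfl
      rw [e1, e2]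
    have g2 : ∑ j : Fin d, dist (sphMap d u j.succ) (sphMap d v j.succ) ^ 2 = ‖w‖^2 := by
      rw [← hwsum]
      apply Finset.sum_congr rfl
      intro j _
      have h1 : sphMap d u j.succ = (Real.sin ‖u‖ / ‖u‖) * u j := rfl
      have h2 : sphMap d v j.succ = (Real.sin ‖v‖ / ‖v‖) * v j := rfl
      have h3 : w j = (Real.sin ‖u‖ / ‖u‖) * u j - (Real.sin ‖v‖ / ‖v‖) * v j := by
        rw [hwdef]; simp [smul_eq_mul]
      rw [h1, h2, Real.dist_eq, sq_abs, h3, Real.norm_eq_abs, sq_abs]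
    rw [g1, g2]
  have hcos : |Real.cos ‖u‖ - Real.cos ‖v‖| ≤ dist u v := by
    calc |Real.cos ‖u‖ - Real.cos ‖v‖| ≤ |‖u‖ - ‖v‖| := myCosLip _ _
      _ ≤ ‖u - v‖ := abs_norm_sub_norm_le u v
      _ = dist u v := (dist_eq_norm u v).symm
  have hw : ‖w‖ ≤ 3 * dist u v := by
    rw [dist_eq_norm]; exact sinDivSmulSub d u v
  rw [EuclideanSpace.dist_eq, hsum]
  have h4 : (Real.cos ‖u‖ - Real.cos ‖v‖)^2 + ‖w‖^2 ≤ (4 * dist u v)^2 := by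
    nlinarith [abs_nonneg (Real.cos ‖u‖ - Real.cos ‖v‖), sq_abs (Real.cos ‖u‖ - Real.cos ‖v‖),
      norm_nonneg w, dist_nonneg (x := u) (y := v)]
  calc Real.sqrt ((Real.cos ‖u‖ - Real.cos ‖v‖)^2 + ‖w‖^2) ≤ Real.sqrt ((4 * dist u v)^2) :=
        Real.sqrt_le_sqrt h4
    _ = 4 * dist u v := Real.sqrt_sq (by positivity)

lemma sphMapSurj (d : ℕ) (hd : 1 ≤ d) (y : EuclideanSpace ℝ (Fin (d+1)))
    (hy : ‖y‖ = 1) : ∃ u : EuclideanSpace ℝ (Fin d), ‖u‖ ≤ π ∧ sphMap d u = y := by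
  set t : ℝ := y 0 with ht
  set v : EuclideanSpace ℝ (Fin d) := WithLp.toLp 2 (fun j : Fin d => y j.succ) with hv
  have hsum : t ^ 2 + ‖v‖ ^ 2 = 1 := by
    have h1 : ∑ i : Fin (d+1), ‖y i‖ ^ 2 = 1 := by
      have := EuclideanSpace.norm_eq y
      rw [hy] at this
      have h2 : (0:ℝ) ≤ ∑ i : Fin (d+1), ‖y i‖ ^ 2 := by positivity
      nlinarith [Real.sq_sqrt h2, this]
    rw [Fin.sum_univ_succ] at h1
    have h3 : ∑ j : Fin d, ‖v j‖ ^ 2 = ‖v‖ ^ 2 := by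
      rw [EuclideanSpace.norm_eq, Real.sq_sqrt]; positivity
    have h4 : ∀ j : Fin d, ‖y j.succ‖ = ‖v j‖ := fun j => rfl
    simp only [h4] at h1
    rw [h3] at h1
    rw [← h1, Real.norm_eq_abs, sq_abs]
  have ht1 : -1 ≤ t := by nlinarith [sq_nonneg (‖v‖), sq_nonneg (t+1)]
  have ht2 : t ≤ 1 := by nlinarith [sq_nonneg (‖v‖), sq_nonneg (t-1)]
  have hsin : Real.sin (Real.arccos t) = ‖v‖ := by
    rw [Real.sin_arccos]
    have : 1 - t ^ 2 = ‖v‖ ^ 2 := by linarith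
    rw [this, Real.sqrt_sq (norm_nonneg v)]
  rcases eq_or_ne v 0 with hv0 | hv0
  · -- v = 0, t = ±1
    have hnv : ‖v‖ = 0 := by rw [hv0]; simp
    have ht' : t ^ 2 = 1 := by rw [hnv] at hsum; nlinarith
    rcases sq_eq_one_iff.mp ht' with h1 | h1
    · refine ⟨0, by simp [Real.pi_pos.le], ?_⟩
      refine PiLp.ext (fun i => ?_)
      refine Fin.cases ?_ (fun j => ?_) i
      · show Real.cos ‖(0 : EuclideanSpace ℝ (Fin d))‖ = y 0
        rw [norm_zero, Real.cos_zero, ← ht, h1]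
      · show (Real.sin ‖(0 : EuclideanSpace ℝ (Fin d))‖ / ‖(0 : EuclideanSpace ℝ (Fin d))‖) * (0 : EuclideanSpace ℝ (Fin d)) j = y j.succ
        have : y j.succ = v j := rfl
        rw [this, hv0]
        simp
    · -- t = -1
      refine ⟨π • EuclideanSpace.single (⟨0, hd⟩ : Fin d) (1:ℝ), ?_, ?_⟩
      · rw [norm_smul, EuclideanSpace.norm_single]
        simp [abs_of_pos Real.pi_pos]
      · have hnu : ‖π • EuclideanSpace.single (⟨0, hd⟩ : Fin d) (1:ℝ)‖ = π := by
          rw [norm_smul, EuclideanSpace.norm_single]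
          simp [abs_of_pos Real.pi_pos]
        refine PiLp.ext (fun i => ?_)
        refine Fin.cases ?_ (fun j => ?_) i
        · show Real.cos ‖π • EuclideanSpace.single (⟨0, hd⟩ : Fin d) (1:ℝ)‖ = y 0
          rw [hnu, Real.cos_pi, ← ht, h1]
        · show (Real.sin ‖π • EuclideanSpace.single (⟨0, hd⟩ : Fin d) (1:ℝ)‖ / _) * _ = y j.succ
          rw [hnu, Real.sin_pi]
          have : y j.succ = v j := rfl
          rw [this, hv0]
          simp
  · -- v ≠ 0
    have hnv : (0:ℝ) < ‖v‖ := norm_pos_iff.mpr hv0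
    set θ := Real.arccos t with hθ
    have hθ0 : 0 < θ := by
      rcases lt_or_eq_of_le (Real.arccos_nonneg t) with h | h
      · exact h
      · exfalso
        have : Real.sin θ = 0 := by rw [hθ, ← h, Real.sin_zero]
        rw [hsin] at this; linarith
    refine ⟨(θ / ‖v‖) • v, ?_, ?_⟩
    · rw [norm_smul, Real.norm_eq_abs, abs_div, abs_of_pos hθ0, abs_of_pos hnv,
        div_mul_cancel₀ _ hnv.ne']
      exact Real.arccos_le_pi t
    · have hnu : ‖(θ / ‖v‖) • v‖ = θ := by
        rw [norm_smul, Real.norm_eq_abs, abs_div, abs_of_pos hθ0, abs_of_pos hnv,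
          div_mul_cancel₀ _ hnv.ne']
      refine PiLp.ext (fun i => ?_)
      refine Fin.cases ?_ (fun j => ?_) i
      · show Real.cos ‖(θ / ‖v‖) • v‖ = y 0
        rw [hnu, hθ, Real.cos_arccos ht1 ht2]
      · show (Real.sin ‖(θ / ‖v‖) • v‖ / ‖(θ / ‖v‖) • v‖) * ((θ / ‖v‖) • v) j = y j.succ
        rw [hnu, hsin]
        have hvj : ((θ / ‖v‖) • v) j = (θ / ‖v‖) * v j := rfl
        rw [hvj]
        have : y j.succ = v j := rfl
        rw [this]
        field_simp
lemma grid1D (n : ℕ) (hn : 1 ≤ n) (x : ℝ) (hx : |x| ≤ π) :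
    ∃ j : Fin n, |x - (-π + (2*(j:ℝ)+1)*π/n)| ≤ π / n := by
  have hπ : (0:ℝ) < π := Real.pi_pos
  have hn' : (0:ℝ) < n := by exact_mod_cast hn
  set h : ℝ := 2*π/n with hh
  have hh0 : 0 < h := by positivity
  set m := ⌊(x + π)/h⌋₊ with hm
  set j : ℕ := min (n-1) m with hj
  have hjn : j < n := lt_of_le_of_lt (min_le_left _ _) (by omega)
  have hxπ : 0 ≤ x + π := by rw [abs_le] at hx; linarith
  have hA : (j:ℝ) * h ≤ x + π := by
    have hjm : (j:ℝ) ≤ m := by exact_mod_cast min_le_right (n-1) m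
    have := Nat.floor_le (by positivity : (0:ℝ) ≤ (x+π)/h)
    rw [← hm] at this
    calc (j:ℝ) * h ≤ (m:ℝ) * h := by nlinarith
      _ ≤ (x+π)/h * h := by nlinarith
      _ = x + π := by field_simp
  have hB : x + π ≤ ((j:ℝ)+1) * h := by
    rcases le_or_gt m (n-1) with hcase | hcase
    · have hjm : j = m := by omega
      have := Nat.lt_floor_add_one ((x+π)/h)
      rw [← hm] at this
      have h2 : (x+π)/h < (m:ℝ) + 1 := by exact_mod_cast this
      rw [hjm]
      calc x + π = (x+π)/h * h := by field_simp
        _ ≤ ((m:ℝ)+1) * h := by nlinarith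
    · have hjm : j = n - 1 := by omega
      have : ((j:ℝ)+1) = n := by
        rw [hjm]; push_cast [Nat.cast_sub hn]; ring
      rw [this]
      have : (n:ℝ) * h = 2*π := by rw [hh]; field_simp
      rw [this]
      rw [abs_le] at hx; linarith
  refine ⟨⟨j, hjn⟩, ?_⟩
  have hc : (-π + (2*((⟨j,hjn⟩:Fin n):ℝ)+1)*π/n) = -π + (j:ℝ)*h + h/2 := by
    simp only [hh]
    field_simp
    ring
  rw [hc, abs_le]
  constructor
  · have : π / n = h / 2 := by rw [hh]; ring
    rw [this]; linarith
  · have : π / n = h / 2 := by rw [hh]; ring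
    rw [this]; linarith

lemma gridNet (d n : ℕ) (hn : 1 ≤ n) :
    ∃ G : Finset (EuclideanSpace ℝ (Fin d)), G.card ≤ n ^ d ∧
      ∀ u : EuclideanSpace ℝ (Fin d), ‖u‖ ≤ π →
        ∃ g ∈ G, dist u g ≤ Real.sqrt d * π / n := by
  classical
  set pt : (Fin d → Fin n) → EuclideanSpace ℝ (Fin d) :=
    fun j => WithLp.toLp 2 (fun i => -π + (2*((j i):ℝ)+1)*π/n) with hpt
  refine ⟨Finset.univ.image pt, ?_, ?_⟩
  · calc (Finset.univ.image pt).card ≤ Finset.univ.card := Finset.card_image_le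
      _ = n ^ d := by rw [Finset.card_univ, Fintype.card_fun]; simp
  · intro u hu
    have hcoord : ∀ i : Fin d, |u i| ≤ π := by
      intro i
      refine le_trans ?_ hu
      rw [EuclideanSpace.norm_eq]
      have h1 : ‖u i‖^2 ≤ ∑ k : Fin d, ‖u k‖^2 :=
        Finset.single_le_sum (f := fun k => ‖u k‖^2) (fun k _ => by positivity) (Finset.mem_univ i)
      calc |u i| = Real.sqrt (‖u i‖^2) := by
            rw [Real.norm_eq_abs, Real.sqrt_sq_eq_abs, abs_abs]
        _ ≤ Real.sqrt (∑ k : Fin d, ‖u k‖^2) := Real.sqrt_le_sqrt h1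
    choose jf hjf using fun i => grid1D n hn (u i) (hcoord i)
    refine ⟨pt jf, Finset.mem_image_of_mem pt (Finset.mem_univ jf), ?_⟩
    rw [EuclideanSpace.dist_eq]
    have hb : ∀ i : Fin d, dist (u i) (pt jf i) ^ 2 ≤ (π/n)^2 := by
      intro i
      have : dist (u i) (pt jf i) = |u i - (-π + (2*((jf i):ℝ)+1)*π/n)| := by
        rw [Real.dist_eq]
      rw [this]
      have h2 := hjf i
      nlinarith [abs_nonneg (u i - (-π + (2*((jf i):ℝ)+1)*π/n)), Real.pi_pos,
        (by positivity : (0:ℝ) ≤ π/n)]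
    have hsum : ∑ i : Fin d, dist (u i) (pt jf i) ^ 2 ≤ d * (π/n)^2 := by
      calc ∑ i : Fin d, dist (u i) (pt jf i) ^ 2 ≤ ∑ _i : Fin d, (π/n)^2 :=
            Finset.sum_le_sum (fun i _ => hb i)
        _ = d * (π/n)^2 := by rw [Finset.sum_const, Finset.card_univ, Fintype.card_fin]; simp
    calc Real.sqrt (∑ i : Fin d, dist (u i) (pt jf i) ^ 2) ≤ Real.sqrt (d * (π/n)^2) :=
          Real.sqrt_le_sqrt hsum
      _ = Real.sqrt d * (π/n) := by
          rw [Real.sqrt_mul (by positivity), Real.sqrt_sq (by positivity)]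
      _ = Real.sqrt d * π / n := by ring


lemma sphereInfinite (d : ℕ) (hd : 1 ≤ d) :
    (sphere (0 : EuclideanSpace ℝ (Fin (d + 1))) 1).Infinite := by
  have hπ := Real.pi_pos
  set e₀ : EuclideanSpace ℝ (Fin d) := EuclideanSpace.single (⟨0, hd⟩ : Fin d) (1:ℝ) with he
  set pts : ℕ → EuclideanSpace ℝ (Fin (d+1)) :=
    fun n => sphMap d ((π/(n+1)) • e₀) with hpts
  have hnorm : ∀ n : ℕ, ‖(π/(n+1) : ℝ) • e₀‖ = π/(n+1) := by
    intro n
    rw [norm_smul, he, EuclideanSpace.norm_single, norm_one, mul_one, Real.norm_eq_abs,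
      abs_of_pos (by positivity)]
  have hinj : Function.Injective pts := by
    intro n m hnm
    have h0 : pts n 0 = pts m 0 := by rw [hnm]
    have hcn : pts n 0 = Real.cos (π/(n+1)) := by
      show Real.cos ‖(π/(n+1) : ℝ) • e₀‖ = _
      rw [hnorm n]
    have hcm : pts m 0 = Real.cos (π/(m+1)) := by
      show Real.cos ‖(π/(m+1) : ℝ) • e₀‖ = _
      rw [hnorm m]
    rw [hcn, hcm] at h0
    have hmem : ∀ k : ℕ, (π/(k+1) : ℝ) ∈ Set.Icc (0:ℝ) π := by
      intro k
      constructor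
      · positivity
      · rw [div_le_iff₀ (by positivity)]
        nlinarith [Nat.cast_nonneg (α := ℝ) k]
    have := Real.injOn_cos (hmem n) (hmem m) h0
    have hnm' : (n:ℝ) + 1 = m + 1 := by
      field_simp at this
      linarith
    exact_mod_cast (add_right_cancel hnm')
  exact Set.infinite_of_injective_forall_mem hinj
    (fun n => mem_sphere_zero_iff_norm.mpr (sphMap_norm d _))

lemma padFinset {α : Type*} (S : Set α) (hS : S.Infinite) (T : Finset α) (hT : ↑T ⊆ S)
    (N : ℕ) (h : T.card ≤ N) :
    ∃ X : Finset α, ↑X ⊆ S ∧ X.card = N ∧ ∀ t ∈ T, t ∈ X := by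
  classical
  have hdiff : (S \ ↑T).Infinite := hS.diff T.finite_toSet
  obtain ⟨P, hPsub, hPcard⟩ := hdiff.exists_subset_card_eq (N - T.card)
  refine ⟨T ∪ P, ?_, ?_, fun t ht => Finset.mem_union_left _ ht⟩
  · intro x hx
    rcases Finset.mem_union.mp (by exact_mod_cast hx) with h1 | h1
    · exact hT h1
    · exact (hPsub h1).1
  · have hdisj : Disjoint T P := by
      rw [Finset.disjoint_right]
      intro a haP haT
      exact (hPsub haP).2 haT
    rw [Finset.card_union_of_disjoint hdisj, hPcard]
    omega

/-- For every `d ≥ 1` there is a constant `C_d > 0` such that for every positive integer `N`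
there is an `N`-point subset of `S^d` with covering radius at most `C_d · N^{-1/d}`: every
point of the sphere is within Euclidean distance `C_d · N^{-1/d}` of some point of the set. -/
theorem exists_good_covering_spherical_codes (d : ℕ) (hd : 1 ≤ d) :
    ∃ C : ℝ, 0 < C ∧ ∀ N : ℕ, 0 < N →
      ∃ X : Finset (EuclideanSpace ℝ (Fin (d + 1))),
        ↑X ⊆ sphere (0 : EuclideanSpace ℝ (Fin (d + 1))) 1 ∧
        X.card = N ∧
        ∀ y ∈ sphere (0 : EuclideanSpace ℝ (Fin (d + 1))) 1,
          ∃ x ∈ X, dist y x ≤ C * (N : ℝ) ^ (-(1 : ℝ) / d) := by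
  classical
  have hπ := Real.pi_pos
  have hd0 : (0:ℝ) < d := by exact_mod_cast hd
  have hsd : (0:ℝ) < Real.sqrt d := Real.sqrt_pos.mpr hd0
  refine ⟨8 * Real.sqrt d * π, by positivity, ?_⟩
  intro N hN
  set x : ℝ := (N:ℝ) ^ ((1:ℝ)/d) with hx
  have hN1 : (1:ℝ) ≤ (N:ℝ) := by exact_mod_cast hN
  have hx1 : (1:ℝ) ≤ x := Real.one_le_rpow hN1 (by positivity)
  set k := ⌊x⌋₊ with hk
  have hk1 : 1 ≤ k := Nat.le_floor (by exact_mod_cast hx1)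
  have hkpos : (0:ℝ) < (k:ℝ) := by exact_mod_cast hk1
  have hkx : (k:ℝ) ≤ x := Nat.floor_le (by linarith)
  have hxk : x < (k:ℝ) + 1 := Nat.lt_floor_add_one x
  have hkd : k ^ d ≤ N := by
    have hreal : ((k:ℝ))^d ≤ (N:ℝ) := by
      calc ((k:ℝ))^d ≤ x^d := pow_le_pow_left₀ (by linarith) hkx d
        _ = (N:ℝ) := by
          rw [hx, ← Real.rpow_natCast ((N:ℝ) ^ ((1:ℝ)/d)) d, ← Real.rpow_mul (by positivity)]
          rw [one_div, inv_mul_cancel₀ (by positivity), Real.rpow_one]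
    exact_mod_cast hreal
  obtain ⟨G, hGcard, hGnet⟩ := gridNet d k hk1
  set T := G.image (sphMap d) with hT
  have hTsub : ↑T ⊆ sphere (0 : EuclideanSpace ℝ (Fin (d + 1))) 1 := by
    intro z hz
    rw [hT] at hz
    simp only [Finset.coe_image, Set.mem_image, Finset.mem_coe] at hz
    obtain ⟨g, _, rfl⟩ := hz
    exact mem_sphere_zero_iff_norm.mpr (sphMap_norm d g)
  have hTcard : T.card ≤ N := le_trans Finset.card_image_le (le_trans hGcard hkd)
  obtain ⟨X, hXsub, hXcard, hTX⟩ := padFinset _ (sphereInfinite d hd) T hTsub N hTcard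
  refine ⟨X, hXsub, hXcard, ?_⟩
  intro y hy
  have hy1 : ‖y‖ = 1 := mem_sphere_zero_iff_norm.mp hy
  obtain ⟨u, hu, hfu⟩ := sphMapSurj d hd y hy1
  obtain ⟨g, hgG, hgd⟩ := hGnet u hu
  refine ⟨sphMap d g, hTX _ (Finset.mem_image_of_mem _ hgG), ?_⟩
  have hd1 : dist y (sphMap d g) ≤ 4 * dist u g := by
    rw [← hfu]; exact sphMapLip d u g
  have h2 : dist y (sphMap d g) ≤ 4 * (Real.sqrt d * π / k) := by
    refine le_trans hd1 ?_
    nlinarith [dist_nonneg (x := u) (y := g)]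
  have hexp : (N:ℝ) ^ (-(1:ℝ)/d) = x⁻¹ := by
    rw [neg_div, Real.rpow_neg (by positivity), hx]
  have hk1' : (1:ℝ) ≤ (k:ℝ) := by exact_mod_cast hk1
  have h2k : x ≤ 2*(k:ℝ) := by linarith
  have hxpos : (0:ℝ) < x := by linarith
  have hxinv : 1/(2*(k:ℝ)) ≤ x⁻¹ := by
    rw [one_div]
    exact inv_anti₀ hxpos h2k
  calc dist y (sphMap d g) ≤ 4 * (Real.sqrt d * π / k) := h2
    _ = (8 * Real.sqrt d * π) * (1/(2*(k:ℝ))) := by field_simp; ring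
    _ ≤ (8 * Real.sqrt d * π) * x⁻¹ := mul_le_mul_of_nonneg_left hxinv (by positivity)
    _ = 8 * Real.sqrt d * π * (N:ℝ) ^ (-(1:ℝ)/d) := by rw [hexp]
end

section
/- Let n be a positive integer, let X ⊂ S^2 be a finite set, and let w : X → ℝ be strictly positive weights. Then there exist a subset Y ⊆ X with card Y ≤ (n+1)² and strictly positive weights v : Y → ℝ such that ∑_{y ∈ Y} v(y) · p(y) = ∑_{x ∈ X} w(x) · p(x) for every real polynomial p in three variables of total degree at most n. -/
open Metric

/-- Carathéodory for cones: a positive combination of vectors can be rewritten as a positive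
combination over a linearly independent subfamily. -/
theorem cone_caratheodory {α E : Type*} [AddCommGroup E] [Module ℝ E]
    (φ : α → E) (s : Finset α) :
    ∀ f : α → ℝ, (∀ x ∈ s, 0 < f x) →
    ∃ t ⊆ s, ∃ g : α → ℝ, (∀ x ∈ t, 0 < g x) ∧
      LinearIndependent ℝ (fun x : t => φ x) ∧
      ∑ x ∈ t, g x • φ x = ∑ x ∈ s, f x • φ x := by
  classical
  induction s using Finset.strongInduction with
  | _ s ih =>
    intro f hf
    by_cases hli : LinearIndependent ℝ (fun x : s => φ x)
    · exact ⟨s, le_refl _, f, hf, hli, rfl⟩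
    · obtain ⟨g0, hg0sum, i0, hi0⟩ := Fintype.not_linearIndependent_iff.mp hli
      -- extend to a function on α
      set c : α → ℝ := fun x => if hx : x ∈ s then g0 ⟨x, hx⟩ else 0 with hc
      have hcsum : ∑ x ∈ s, c x • φ x = 0 := by
        rw [← hg0sum, ← Finset.sum_attach s (fun x => c x • φ x)]
        refine Finset.sum_congr rfl fun x _ => ?_
        simp [hc, x.2]
      -- WLOG there is a positive coefficient
      obtain ⟨c, hcsum, hcpos⟩ :
          ∃ c : α → ℝ, (∑ x ∈ s, c x • φ x = 0) ∧ ∃ x ∈ s, 0 < c x := by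
        rcases lt_trichotomy (c (i0 : α)) 0 with h | h | h
        · refine ⟨fun x => -c x, ?_, (i0 : α), i0.2, by simp; linarith⟩
          simp only [neg_smul, Finset.sum_neg_distrib, hcsum, neg_zero]
        · exact absurd (by simpa [hc, i0.2] using h) hi0
        · exact ⟨c, hcsum, (i0 : α), i0.2, h⟩
      set u := s.filter (fun x => 0 < c x) with hu
      obtain ⟨x1, hx1u⟩ : u.Nonempty := by
        obtain ⟨x, hxs, hxc⟩ := hcpos
        exact ⟨x, Finset.mem_filter.mpr ⟨hxs, hxc⟩⟩
      obtain ⟨x0, hx0u, hx0min⟩ := u.exists_min_image (fun x => f x / c x) ⟨x1, hx1u⟩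
      have hx0s : x0 ∈ s := (Finset.mem_filter.mp hx0u).1
      have hx0c : 0 < c x0 := (Finset.mem_filter.mp hx0u).2
      set δ := f x0 / c x0 with hδ
      have hδpos : 0 < δ := div_pos (hf x0 hx0s) hx0c
      set f' : α → ℝ := fun x => f x - δ * c x with hf'
      have hf'nn : ∀ x ∈ s, 0 ≤ f' x := by
        intro x hxs
        by_cases hcx : 0 < c x
        · have := hx0min x (Finset.mem_filter.mpr ⟨hxs, hcx⟩)
          have : δ * c x ≤ f x := by
            rw [div_le_div_iff₀ hx0c hcx] at this
            calc δ * c x = f x0 / c x0 * c x := rfl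
            _ ≤ f x := by
                rw [div_mul_eq_mul_div, div_le_iff₀ hx0c]; linarith
          simp [hf']; linarith
        · have : 0 ≤ -(δ * c x) := by nlinarith [hf x hxs]
          have := hf x hxs
          simp [hf']; nlinarith
      have hf'x0 : f' x0 = 0 := by simp only [hf', hδ]; rw [div_mul_cancel₀ _ hx0c.ne', sub_self]
      have hsum' : ∑ x ∈ s, f' x • φ x = ∑ x ∈ s, f x • φ x := by
        simp only [hf', sub_smul, Finset.sum_sub_distrib, mul_smul]
        rw [← Finset.smul_sum, hcsum, smul_zero, sub_zero]
      set s' := s.filter (fun x => 0 < f' x) with hs'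
      have hs'sub : s' ⊆ s := Finset.filter_subset _ _
      have hx0ns' : x0 ∉ s' := by simp [hs', hf'x0]
      have hss : s' ⊂ s := Finset.ssubset_iff_of_subset hs'sub |>.mpr ⟨x0, hx0s, hx0ns'⟩
      have hsum'' : ∑ x ∈ s', f' x • φ x = ∑ x ∈ s, f' x • φ x := by
        refine Finset.sum_subset hs'sub fun x hxs hxns' => ?_
        have h0 : f' x = 0 := by
          rcases (hf'nn x hxs).lt_or_eq with h | h
          · exact absurd (Finset.mem_filter.mpr ⟨hxs, h⟩) hxns'
          · exact h.symm
        simp [h0]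
      obtain ⟨t, hts', g, hg, hli', hsum3⟩ := ih s' hss f' (fun x hx => (Finset.mem_filter.mp hx).2)
      exact ⟨t, hts'.trans hs'sub, g, hg, hli', by rw [hsum3, hsum'', hsum']⟩

noncomputable section CT

abbrev CTPt := EuclideanSpace ℝ (Fin 3)
abbrev CTSph := (sphere (0 : CTPt) 1 : Set CTPt)

/-- Monomial function on the sphere. -/
def ctMono (a b c : ℕ) : CTSph → ℝ :=
  fun t => (t : CTPt) 0 ^ a * (t : CTPt) 1 ^ b * (t : CTPt) 2 ^ c

/-- Index set of reduced monomials of degree at most `n` with `z`-exponent at most `1`. -/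
def ctB (n : ℕ) : Finset (ℕ × ℕ × ℕ) :=
  ((Finset.range (n+1)) ×ˢ (Finset.range (n+1)) ×ˢ (Finset.range 2)).filter
    (fun q => q.1 + q.2.1 + q.2.2 ≤ n)

open Classical in
def ctG (n : ℕ) : Finset (CTSph → ℝ) := (ctB n).image (fun q => ctMono q.1 q.2.1 q.2.2)

/-- The span of reduced monomial functions on the sphere. -/
def ctV (n : ℕ) : Submodule ℝ (CTSph → ℝ) := Submodule.span ℝ (ctG n)

lemma ctB_card (n : ℕ) : (ctB n).card ≤ (n+1)^2 := by
  have h2 : (n+1)^2 = ((Finset.range (n+1)) ×ˢ (Finset.range (n+1))).card := by simp [sq]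
  rw [h2]
  apply Finset.card_le_card_of_injOn
    (fun q => if q.2.2 = 0 then (q.1, q.1 + q.2.1) else (q.1 + q.2.1 + 1, q.1))
  · intro q hq
    rw [Finset.mem_coe] at hq; simp only [ctB, Finset.mem_filter, Finset.mem_product, Finset.mem_range] at hq
    obtain ⟨⟨ha, hb, hc⟩, hsum⟩ := hq
    by_cases h : q.2.2 = 0 <;> simp [h, Finset.mem_product, Finset.mem_range] <;> omega
  · rintro ⟨a, b, c⟩ hq ⟨a', b', c'⟩ hq' heq
    simp [ctB, Finset.mem_filter, Finset.mem_product, Finset.mem_range] at hq hq'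
    by_cases h : c = 0 <;> by_cases h' : c' = 0 <;>
      simp [h, h', Prod.ext_iff] at heq ⊢ <;> omega

lemma ct_sphere_eq (t : CTSph) :
    (t : CTPt) 0 ^ 2 + (t : CTPt) 1 ^ 2 + (t : CTPt) 2 ^ 2 = 1 := by
  have ht : ‖(t : CTPt)‖ = 1 := by
    have := t.2
    simpa [mem_sphere_iff_norm] using this
  have h := EuclideanSpace.norm_eq (t : CTPt)
  rw [ht] at h
  have h1 : (∑ i, ‖(t : CTPt) i‖ ^ 2) = 1 := by
    have hnn : (0:ℝ) ≤ ∑ i, ‖(t : CTPt) i‖ ^ 2 :=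
      Finset.sum_nonneg fun i _ => by positivity
    nlinarith [Real.sq_sqrt hnn, h.symm]
  simpa [Fin.sum_univ_three, Real.norm_eq_abs, sq_abs] using h1

lemma ctMono_mem (n : ℕ) : ∀ c a b : ℕ, a + b + c ≤ n → ctMono a b c ∈ ctV n := by
  intro c
  induction c using Nat.strong_induction_on with
  | _ c ih =>
    intro a b hsum
    match c with
    | 0 | 1 =>
      apply Submodule.subset_span
      simp only [ctG, Finset.coe_image, Set.mem_image, Finset.mem_coe]
      exact ⟨(a, b, _),
        by simp [ctB, Finset.mem_filter, Finset.mem_product, Finset.mem_range]; omega, rfl⟩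
    | (c' + 2) =>
      have key : ctMono a b (c' + 2) =
          ctMono a b c' - ctMono (a+2) b c' - ctMono a (b+2) c' := by
        funext t
        have hs := ct_sphere_eq t
        simp only [ctMono, Pi.sub_apply]
        linear_combination ((t : CTPt) 0 ^ a * (t : CTPt) 1 ^ b * (t : CTPt) 2 ^ c') * hs
      rw [key]
      exact sub_mem
        (sub_mem (ih c' (by omega) a b (by omega)) (ih c' (by omega) (a+2) b (by omega)))
        (ih c' (by omega) a (b+2) (by omega))

lemma ct_restrict_mem (n : ℕ) (p : MvPolynomial (Fin 3) ℝ) (hp : p.totalDegree ≤ n) :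
    (fun t : CTSph => MvPolynomial.eval (fun i => (t : CTPt) i) p) ∈ ctV n := by
  have hEq : (fun t : CTSph => MvPolynomial.eval (fun i => (t : CTPt) i) p)
      = ∑ d ∈ p.support, MvPolynomial.coeff d p • ctMono (d 0) (d 1) (d 2) := by
    funext t
    rw [MvPolynomial.eval_eq]
    simp only [Finset.sum_apply, Pi.smul_apply, smul_eq_mul, ctMono]
    refine Finset.sum_congr rfl fun d _ => ?_
    congr 1
    rw [show ∏ i ∈ d.support, (t : CTPt) i ^ d i = ∏ i : Fin 3, (t : CTPt) i ^ d i from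
      Finset.prod_subset (Finset.subset_univ _)
        (fun i _ hi => by simp [Finsupp.notMem_support_iff.mp hi]), Fin.prod_univ_three]
  rw [hEq]
  refine Submodule.sum_mem _ fun d hd => Submodule.smul_mem _ _ ?_
  apply ctMono_mem
  have h1 := MvPolynomial.le_totalDegree hd
  have h2 : (d.sum fun _ e => e) = d 0 + d 1 + d 2 := by
    rw [Finsupp.sum_fintype _ _ (fun _ => rfl), Fin.sum_univ_three]
  omega

instance ctV_fd (n : ℕ) : FiniteDimensional ℝ (ctV n) :=
  FiniteDimensional.span_finset ℝ (ctG n)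

lemma ctV_finrank (n : ℕ) : Module.finrank ℝ (ctV n) ≤ (n+1)^2 := by
  classical
  have h : Set.finrank ℝ (↑(ctG n) : Set (CTSph → ℝ)) ≤ (ctG n).card :=
    finrank_span_finset_le_card (ctG n)
  have h2 : (ctG n).card ≤ (ctB n).card := by
    rw [ctG]; exact Finset.card_image_le
  exact h.trans (h2.trans (ctB_card n))

/-- Carathéodory–Tchakaloff subset extraction on `S^2`: any positively weighted finite set
`X ⊆ S^2` admits a subset `Y ⊆ X` of at most `(n+1)²` points with strictly positive weights
reproducing the weighted sums of all polynomials of total degree at most `n` over `X`. -/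
theorem caratheodory_tchakaloff_submesh
    (n : ℕ) (hn : 0 < n)
    (X : Finset (EuclideanSpace ℝ (Fin 3)))
    (hX : ↑X ⊆ sphere (0 : EuclideanSpace ℝ (Fin 3)) 1)
    (w : EuclideanSpace ℝ (Fin 3) → ℝ) (hw : ∀ x ∈ X, 0 < w x) :
    ∃ Y : Finset (EuclideanSpace ℝ (Fin 3)), Y ⊆ X ∧ Y.card ≤ (n + 1) ^ 2 ∧
      ∃ v : EuclideanSpace ℝ (Fin 3) → ℝ, (∀ y ∈ Y, 0 < v y) ∧
        ∀ p : MvPolynomial (Fin 3) ℝ, p.totalDegree ≤ n →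
          ∑ y ∈ Y, v y * MvPolynomial.eval (fun i => y i) p =
            ∑ x ∈ X, w x * MvPolynomial.eval (fun i => x i) p := by
  classical
  set φ : CTPt → (ctV n →ₗ[ℝ] ℝ) := fun x =>
    if hx : x ∈ sphere (0 : CTPt) 1 then
      (LinearMap.proj (⟨x, hx⟩ : CTSph)).comp (ctV n).subtype
    else 0 with hφ
  obtain ⟨Y, hYX, g, hgpos, hli, hsum⟩ := cone_caratheodory φ X w hw
  refine ⟨Y, hYX, ?_, g, hgpos, ?_⟩
  · calc Y.card = Fintype.card Y := (Fintype.card_coe Y).symm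
    _ ≤ Module.finrank ℝ (Module.Dual ℝ (ctV n)) := hli.fintype_card_le_finrank
    _ = Module.finrank ℝ (ctV n) := Subspace.dual_finrank_eq
    _ ≤ (n+1)^2 := ctV_finrank n
  · intro p hp
    set r : ctV n := ⟨fun t : CTSph => MvPolynomial.eval (fun i => (t : CTPt) i) p,
      ct_restrict_mem n p hp⟩ with hr
    have happ : ∀ x ∈ X, (φ x) r = MvPolynomial.eval (fun i => x i) p := by
      intro x hx
      have hxs : x ∈ sphere (0 : CTPt) 1 := hX hx
      simp only [hφ]
      rw [dif_pos hxs]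
      rfl
    have h1 : ∑ y ∈ Y, g y * (φ y) r = ∑ x ∈ X, w x * (φ x) r := by
      have h0 := LinearMap.congr_fun hsum r
      simpa only [LinearMap.coe_sum, Finset.sum_apply, LinearMap.smul_apply,
        smul_eq_mul] using h0
    calc ∑ y ∈ Y, g y * MvPolynomial.eval (fun i => y i) p
        = ∑ y ∈ Y, g y * (φ y) r :=
          Finset.sum_congr rfl fun y hy => by rw [happ y (hYX hy)]
      _ = ∑ x ∈ X, w x * (φ x) r := h1
      _ = ∑ x ∈ X, w x * MvPolynomial.eval (fun i => x i) p :=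
          Finset.sum_congr rfl fun x hx => by rw [happ x hx]

end CT
end
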